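/- arXiv:1707.02598 — 3 statements merged into one kernel-verified Lean document; each statement's English description precedes it below -/
import Mathlib

section
/- In a quitting game, if there is a normal player i ∈ I_* such that the vector r^i has all coordinates nonnegative (r^i ∈ ℝ^N_{≥0}), then for every ε > 0 the game admits a stationary ε-equilibrium. -/
noncomputable section

/-- The probability that, under the behavior strategy profile `x`, the game terminates at
stage `t` (0-indexed) with quitting set `S`. -/
def termProb {N : ℕ} (x : Fin N → ℕ → ℝ) (t : ℕ) (S : Finset (Fin N)) : ℝ :=
  (∏ u ∈ Finset.range t, ∏ i : Fin N, (1 - x i u)) *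
    ((∏ i ∈ S, x i t) * ∏ i ∈ Sᶜ, (1 - x i t))

/-- The collection of nonempty subsets of players. -/
def nonempties (N : ℕ) : Finset (Finset (Fin N)) :=
  Finset.univ.filter fun S => S ≠ ∅

/-- The expected payoff of player `i` under the behavior strategy profile `x` in the
quitting game with payoffs `r`. -/
def payoff {N : ℕ} (r : Finset (Fin N) → Fin N → ℝ) (x : Fin N → ℕ → ℝ) (i : Fin N) : ℝ :=
  (∑' t : ℕ, ∑ S ∈ nonempties N, termProb x t S * r S i) +
    (1 - ∑' t : ℕ, ∑ S ∈ nonempties N, termProb x t S) * r ∅ i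

/-- `x` is an `ε`-equilibrium: it is a valid profile and no player can gain more than `ε`
by a unilateral deviation to any valid behavior strategy. -/
def IsEpsEquilibrium {N : ℕ} (r : Finset (Fin N) → Fin N → ℝ)
    (x : Fin N → ℕ → ℝ) (ε : ℝ) : Prop :=
  (∀ i t, x i t ∈ Set.Icc (0 : ℝ) 1) ∧
    ∀ (i : Fin N) (x' : ℕ → ℝ), (∀ t, x' t ∈ Set.Icc (0 : ℝ) 1) →
      payoff r x i ≥ payoff r (Function.update x i x') i - ε

/-- The decreasing sequence of sets of players `I_0 ⊇ I_1 ⊇ ⋯`: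
`I_0 = I` and `I_{l+1} = {i ∈ I_l : ∃ j ∈ I_l, j ≠ i, r^j_i ≤ 0}`. -/
def normalLevel {N : ℕ} (r : Finset (Fin N) → Fin N → ℝ) : ℕ → Set (Fin N)
  | 0 => Set.univ
  | l + 1 => {i | i ∈ normalLevel r l ∧ ∃ j ∈ normalLevel r l, j ≠ i ∧ r {j} i ≤ 0}

/-- The set `I_* = ∩_l I_l` of normal players. -/
def normalPlayers {N : ℕ} (r : Finset (Fin N) → Fin N → ℝ) : Set (Fin N) :=
  ⋂ l, normalLevel r l

/-- A solution `(w,z)` of the linear complementarity problem `LCP((r^i)_{i=1}^n, q)`,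
where `r i` is the vector `r^i`: `w ∈ ℝ^n_{≥0}`, `z ∈ Δ({0,1,…,n})`,
`w = z_0 q + ∑_i z_i r^i`, and `z_i = 0` or `w_i = 0` for every `i ∈ [n]`. -/
def IsLCPSolution (n : ℕ) (r : Fin n → Fin n → ℝ) (q w : Fin n → ℝ)
    (z : Fin (n + 1) → ℝ) : Prop :=
  (∀ i, 0 ≤ w i) ∧ (∀ i, 0 ≤ z i) ∧ (∑ i, z i = 1) ∧
    (∀ j, w j = z 0 * q j + ∑ i : Fin n, z i.succ * r i j) ∧
    (∀ i : Fin n, z i.succ = 0 ∨ w i = 0)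

/-- The matrix with columns `r^1,…,r^n` is a `Q`-matrix if `LCP((r^i), q)` has a solution
for every `q ∈ ℝ^n`. -/
def IsQMatrix (n : ℕ) (r : Fin n → Fin n → ℝ) : Prop :=
  ∀ q : Fin n → ℝ, ∃ (w : Fin n → ℝ) (z : Fin (n + 1) → ℝ), IsLCPSolution n r q w z


namespace QGaux
open Finset

variable {N : ℕ}

lemma bin (f : Fin N → ℝ) (T : Finset (Fin N)) :
    ∑ S ∈ T.powerset, (∏ k ∈ S, f k) * ∏ k ∈ T \ S, (1 - f k) = 1 := by
  rw [← Finset.prod_add]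
  exact Finset.prod_eq_one fun k _ => by ring

lemma mem_nonempties {S : Finset (Fin N)} : S ∈ nonempties N ↔ S ≠ ∅ := by
  simp [nonempties]

lemma nonempties_eq : nonempties N = (univ : Finset (Finset (Fin N))).erase ∅ := by
  rw [← Finset.filter_ne' univ ∅]; rfl

lemma stage_total (b : Fin N → ℝ) :
    ∑ S ∈ nonempties N, (∏ k ∈ S, b k) * ∏ k ∈ Sᶜ, (1 - b k) = 1 - ∏ k, (1 - b k) := by
  have h := bin b univ
  rw [Finset.powerset_univ] at h
  have h3 : ∑ S : Finset (Fin N), (∏ k ∈ S, b k) * ∏ k ∈ Sᶜ, (1 - b k) = 1 := by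
    simp only [← Finset.compl_eq_univ_sdiff] at h
    exact h
  have h2 := Finset.sum_erase_add univ
    (fun S => (∏ k ∈ S, b k) * ∏ k ∈ Sᶜ, (1 - b k)) (Finset.mem_univ (∅ : Finset (Fin N)))
  rw [h3] at h2
  simp only [Finset.prod_empty, Finset.compl_empty, one_mul] at h2
  rw [nonempties_eq]
  linarith

lemma compl_erase (m : Fin N) (S : Finset (Fin N)) :
    (Sᶜ : Finset (Fin N)).erase m = ({m}ᶜ : Finset (Fin N)) \ S := by
  ext a
  simp only [Finset.mem_erase, Finset.mem_compl, Finset.mem_sdiff, Finset.mem_singleton]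

lemma filter_not_mem_eq (m : Fin N) :
    (nonempties N).filter (fun S => m ∉ S) = (({m}ᶜ : Finset (Fin N)).powerset).erase ∅ := by
  ext S
  simp only [Finset.mem_filter, mem_nonempties, Finset.mem_erase, Finset.mem_powerset,
    Finset.subset_iff, Finset.mem_compl, Finset.mem_singleton]
  constructor
  · rintro ⟨h1, h2⟩
    exact ⟨h1, fun a ha hc => h2 (hc ▸ ha)⟩
  · rintro ⟨h1, h2⟩
    exact ⟨h1, fun hm => h2 hm rfl⟩

lemma coeff_sum (a : Fin N → ℝ) (m : Fin N) :
    ∑ S ∈ (nonempties N).filter (fun S => m ∉ S),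
      (∏ k ∈ S, a k) * ∏ k ∈ (Sᶜ : Finset (Fin N)).erase m, (1 - a k)
      = 1 - ∏ k ∈ ({m}ᶜ : Finset (Fin N)), (1 - a k) := by
  rw [filter_not_mem_eq]
  have h3 : ∀ S : Finset (Fin N),
      (∏ k ∈ S, a k) * ∏ k ∈ (Sᶜ : Finset (Fin N)).erase m, (1 - a k)
      = (∏ k ∈ S, a k) * ∏ k ∈ ({m}ᶜ : Finset (Fin N)) \ S, (1 - a k) := fun S => by
    rw [compl_erase]
  simp only [h3]
  have h := bin a ({m}ᶜ : Finset (Fin N))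
  have h2 := Finset.sum_erase_add (({m}ᶜ : Finset (Fin N)).powerset)
    (fun S => (∏ k ∈ S, a k) * ∏ k ∈ ({m}ᶜ : Finset (Fin N)) \ S, (1 - a k))
    (Finset.mem_powerset.2 (Finset.empty_subset _))
  rw [h] at h2
  simp only [Finset.prod_empty, Finset.sdiff_empty, one_mul] at h2
  linarith

lemma split_sum (b : Fin N → ℝ) (m : Fin N) :
    ∑ S ∈ (nonempties N).filter (fun S => m ∈ S ∧ S ≠ {m}),
      (∏ k ∈ S, b k) * ∏ k ∈ Sᶜ, (1 - b k)
    = b m * (1 - ∏ k ∈ ({m}ᶜ : Finset (Fin N)), (1 - b k)) := by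
  rw [← coeff_sum b m, Finset.mul_sum]
  refine Finset.sum_nbij' (fun S => S.erase m) (fun S => insert m S) ?_ ?_ ?_ ?_ ?_
  · intro S hS
    simp only [Finset.mem_filter, mem_nonempties] at hS ⊢
    obtain ⟨hne, hm, hnsing⟩ := hS
    refine ⟨?_, Finset.notMem_erase m S⟩
    intro he
    apply hnsing
    apply Finset.eq_singleton_iff_unique_mem.2
    refine ⟨hm, fun x hx => ?_⟩
    by_contra hxm
    have hx' : x ∈ S.erase m := Finset.mem_erase.2 ⟨hxm, hx⟩
    rw [he] at hx'
    exact absurd hx' (Finset.notMem_empty x)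
  · intro S hS
    simp only [Finset.mem_filter, mem_nonempties] at hS ⊢
    obtain ⟨hne, hm⟩ := hS
    obtain ⟨l, hl⟩ := Finset.nonempty_iff_ne_empty.2 hne
    refine ⟨Finset.insert_ne_empty _ _, Finset.mem_insert_self _ _, fun hc => ?_⟩
    have : l ∈ ({m} : Finset (Fin N)) := hc ▸ Finset.mem_insert_of_mem hl
    rw [Finset.mem_singleton] at this
    exact hm (this ▸ hl)
  · intro S hS
    simp only [Finset.mem_filter, mem_nonempties] at hS
    exact Finset.insert_erase hS.2.1
  · intro S hS
    simp only [Finset.mem_filter, mem_nonempties] at hS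
    exact Finset.erase_insert hS.2
  · intro S hS
    simp only [Finset.mem_filter, mem_nonempties] at hS
    obtain ⟨hne, hm, hnsing⟩ := hS
    have hprod : ∏ k ∈ S, b k = b m * ∏ k ∈ S.erase m, b k :=
      (Finset.mul_prod_erase S b hm).symm
    have hc : ((S.erase m)ᶜ : Finset (Fin N)).erase m = (Sᶜ : Finset (Fin N)) := by
      ext a
      by_cases ham : a = m
      · subst ham; simp [hm]
      · simp [Finset.mem_erase, Finset.mem_compl, ham]
    rw [hprod, hc]
    ring


/-- survival probability before stage `t` -/
def Qs (y : Fin N → ℕ → ℝ) (t : ℕ) : ℝ := ∏ u ∈ Finset.range t, ∏ k, (1 - y k u)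

lemma termProb_eq (y : Fin N → ℕ → ℝ) (t : ℕ) (S : Finset (Fin N)) :
    termProb y t S = Qs y t * ((∏ k ∈ S, y k t) * ∏ k ∈ Sᶜ, (1 - y k t)) := rfl

lemma termProb_nonneg {y : Fin N → ℕ → ℝ} (hy : ∀ k t, y k t ∈ Set.Icc (0:ℝ) 1)
    (t : ℕ) (S : Finset (Fin N)) : 0 ≤ termProb y t S := by
  have h1 : ∀ k u, 0 ≤ y k u := fun k u => (hy k u).1
  have h2 : ∀ k u, 0 ≤ 1 - y k u := fun k u => by linarith [(hy k u).2]
  exact mul_nonneg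
    (Finset.prod_nonneg fun u _ => Finset.prod_nonneg fun k _ => h2 k u)
    (mul_nonneg (Finset.prod_nonneg fun k _ => h1 k t)
      (Finset.prod_nonneg fun k _ => h2 k t))

lemma Qs_zero (y : Fin N → ℕ → ℝ) : Qs y 0 = 1 := by simp [Qs]

lemma Qs_succ (y : Fin N → ℕ → ℝ) (t : ℕ) :
    Qs y (t+1) = Qs y t * ∏ k, (1 - y k t) := Finset.prod_range_succ _ _

lemma Qs_nonneg {y : Fin N → ℕ → ℝ} (hy : ∀ k t, y k t ∈ Set.Icc (0:ℝ) 1) (t : ℕ) :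
    0 ≤ Qs y t :=
  Finset.prod_nonneg fun u _ => Finset.prod_nonneg fun k _ => by linarith [(hy k u).2]

lemma sum_termProb (y : Fin N → ℕ → ℝ) (t : ℕ) :
    ∑ S ∈ nonempties N, termProb y t S = Qs y t - Qs y (t+1) := by
  simp only [termProb_eq]
  rw [← Finset.mul_sum, stage_total, Qs_succ]
  ring

/-- Master deviation bound. -/
lemma payoff_le (r : Finset (Fin N) → Fin N → ℝ)
    (hr : ∀ S k, r S k ∈ Set.Icc (-1 : ℝ) 1) (hdiag : ∀ k : Fin N, r {k} k = 0)
    (a : Fin N → ℝ) (ha : ∀ k, a k ∈ Set.Icc (0 : ℝ) 1)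
    (m : Fin N) (s : ℕ → ℝ) (hs : ∀ t, s t ∈ Set.Icc (0 : ℝ) 1)
    (σ : ℝ) (hσdef : σ = 1 - ∏ k ∈ ({m}ᶜ : Finset (Fin N)), (1 - a k)) (hσ : 0 < σ) :
    payoff r (Function.update (fun k _ => a k) m s) m ≤
      max (∑ S ∈ (nonempties N).filter (fun S => m ∉ S),
        ((∏ k ∈ S, a k) * ∏ k ∈ (Sᶜ : Finset (Fin N)).erase m, (1 - a k)) * r S m) 0 / σ + σ := by
  set β := ∑ S ∈ (nonempties N).filter (fun S => m ∉ S),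
      ((∏ k ∈ S, a k) * ∏ k ∈ (Sᶜ : Finset (Fin N)).erase m, (1 - a k)) * r S m with hβdef
  set y := Function.update (fun k _ => a k) m s with hy
  have hym : ∀ t, y m t = s t := fun t => by rw [hy, Function.update_self]
  have hyo : ∀ k, k ≠ m → ∀ t, y k t = a k := fun k hk t => by
    rw [hy, Function.update_of_ne hk]
  have hyv : ∀ k t, y k t ∈ Set.Icc (0:ℝ) 1 := by
    intro k t
    by_cases hk : k = m
    · subst hk; rw [hym]; exact hs t
    · rw [hyo k hk]; exact ha k
  have hs0 : ∀ t, 0 ≤ s t := fun t => (hs t).1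
  have hs1 : ∀ t, s t ≤ 1 := fun t => (hs t).2
  have hσ1 : σ ≤ 1 := by
    have : (0:ℝ) ≤ ∏ k ∈ ({m}ᶜ : Finset (Fin N)), (1 - a k) :=
      Finset.prod_nonneg fun k _ => by linarith [(ha k).2]
    rw [hσdef]; linarith
  have hcompl : ∀ t, ∏ k ∈ ({m}ᶜ : Finset (Fin N)), (1 - y k t) = 1 - σ := by
    intro t
    have he : ∀ k ∈ ({m}ᶜ : Finset (Fin N)), (1 - y k t) = 1 - a k := by
      intro k hk
      have hkm : k ≠ m := by simpa using Finset.mem_compl.1 hk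
      rw [hyo k hkm]
    rw [Finset.prod_congr rfl he, hσdef, sub_sub_cancel]
  have huniv_erase : (Finset.univ.erase m) = ({m}ᶜ : Finset (Fin N)) := by
    ext a; simp [Finset.mem_erase]
  have hprodall : ∀ t, ∏ k, (1 - y k t) = (1 - s t) * (1 - σ) := by
    intro t
    rw [← Finset.mul_prod_erase Finset.univ _ (Finset.mem_univ m), hym, huniv_erase, hcompl]
  have hQn : ∀ t, 0 ≤ Qs y t := Qs_nonneg hyv
  have hQ0 : Qs y 0 = 1 := Qs_zero y
  have hQsucc : ∀ t, Qs y (t+1) = Qs y t * ((1 - s t) * (1 - σ)) := fun t => by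
    rw [Qs_succ, hprodall]
  have h1σ0 : (0:ℝ) ≤ 1 - σ := by linarith
  have hQmono : ∀ t, σ * (Qs y t * (1 - s t)) ≤ Qs y t - Qs y (t+1) := by
    intro t
    rw [hQsucc t]
    nlinarith [mul_nonneg (hQn t) (hs0 t)]
  have hQpow : ∀ t, Qs y t ≤ (1 - σ) ^ t := by
    intro t
    induction t with
    | zero => rw [hQ0]; simp
    | succ n ih =>
      rw [hQsucc n, pow_succ]
      have h1 : Qs y n * ((1 - s n) * (1 - σ)) ≤ Qs y n * (1 - σ) := by
        apply mul_le_mul_of_nonneg_left _ (hQn n)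
        nlinarith [hs0 n]
      have h2 : Qs y n * (1 - σ) ≤ (1 - σ) ^ n * (1 - σ) :=
        mul_le_mul_of_nonneg_right ih h1σ0
      linarith
  have hQlim : Filter.Tendsto (Qs y) Filter.atTop (nhds 0) :=
    squeeze_zero hQn hQpow (tendsto_pow_atTop_nhds_zero_of_lt_one h1σ0 (by linarith))
  -- total termination probability
  have hgeq : ∀ t, ∑ S ∈ nonempties N, termProb y t S = Qs y t - Qs y (t+1) :=
    sum_termProb y
  have hgnn : ∀ t, 0 ≤ ∑ S ∈ nonempties N, termProb y t S :=
    fun t => Finset.sum_nonneg fun S _ => termProb_nonneg hyv t S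
  have hgrange : ∀ n, ∑ t ∈ Finset.range n, ∑ S ∈ nonempties N, termProb y t S
      = 1 - Qs y n := by
    intro n
    rw [Finset.sum_congr rfl fun t _ => hgeq t, Finset.sum_range_sub' (Qs y) n, hQ0]
  have hgpartial : ∀ n, ∑ t ∈ Finset.range n, ∑ S ∈ nonempties N, termProb y t S ≤ 1 := by
    intro n; rw [hgrange n]; linarith [hQn n]
  have hgsummable : Summable (fun t => ∑ S ∈ nonempties N, termProb y t S) :=
    summable_of_sum_range_le hgnn hgpartial
  have hgsum : ∑' t, ∑ S ∈ nonempties N, termProb y t S = 1 := by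
    have h1 := hgsummable.hasSum.tendsto_sum_nat
    have h2 : Filter.Tendsto
        (fun n => ∑ t ∈ Finset.range n, ∑ S ∈ nonempties N, termProb y t S)
        Filter.atTop (nhds 1) := by
      simp only [hgrange]
      simpa using (tendsto_const_nhds (x := (1:ℝ)) (f := Filter.atTop)).sub hQlim
    exact tendsto_nhds_unique h1 h2
  -- the r-weighted series
  have hfabs : ∀ t, |∑ S ∈ nonempties N, termProb y t S * r S m|
      ≤ ∑ S ∈ nonempties N, termProb y t S := by
    intro t
    refine le_trans (Finset.abs_sum_le_sum_abs _ _) (Finset.sum_le_sum fun S _ => ?_)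
    rw [abs_mul, abs_of_nonneg (termProb_nonneg hyv t S)]
    exact mul_le_of_le_one_right (termProb_nonneg hyv t S)
      (abs_le.2 ⟨(hr S m).1, (hr S m).2⟩)
  have hfsummable : Summable (fun t => ∑ S ∈ nonempties N, termProb y t S * r S m) :=
    Summable.of_norm_bounded hgsummable (fun t => by
      rw [Real.norm_eq_abs]; exact hfabs t)
  -- decomposition of the stage sum
  have hA : ∀ t, ∑ S ∈ (nonempties N).filter (fun S => m ∉ S), termProb y t S * r S m
      = Qs y t * (1 - s t) * β := by
    intro t
    rw [hβdef, Finset.mul_sum]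
    refine Finset.sum_congr rfl fun S hS => ?_
    have hmS : m ∉ S := (Finset.mem_filter.1 hS).2
    have hmSc : m ∈ (Sᶜ : Finset (Fin N)) := Finset.mem_compl.2 hmS
    have e1 : ∏ k ∈ S, y k t = ∏ k ∈ S, a k :=
      Finset.prod_congr rfl fun k hk => hyo k (fun h => hmS (h ▸ hk)) t
    have e2 : ∏ k ∈ (Sᶜ : Finset (Fin N)), (1 - y k t)
        = (1 - s t) * ∏ k ∈ (Sᶜ : Finset (Fin N)).erase m, (1 - a k) := by
      rw [← Finset.mul_prod_erase _ _ hmSc, hym]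
      congr 1
      exact Finset.prod_congr rfl fun k hk => by rw [hyo k (Finset.mem_erase.1 hk).1]
    rw [termProb_eq, e1, e2]
    ring
  have hB : ∀ t, ∑ S ∈ (nonempties N).filter (fun S => m ∈ S), termProb y t S * r S m
      ≤ Qs y t * (s t * σ) := by
    intro t
    have hsplit := Finset.sum_filter_add_sum_filter_not
      ((nonempties N).filter (fun S => m ∈ S)) (fun S => S ≠ {m})
      (fun S => termProb y t S * r S m)
    have hz : ∑ S ∈ ((nonempties N).filter (fun S => m ∈ S)).filter (fun S => ¬S ≠ {m}),
        termProb y t S * r S m = 0 := by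
      refine Finset.sum_eq_zero fun S hS => ?_
      have hSm : S = {m} := not_not.1 (Finset.mem_filter.1 hS).2
      rw [hSm, hdiag m, mul_zero]
    have hle : ∑ S ∈ ((nonempties N).filter (fun S => m ∈ S)).filter (fun S => S ≠ {m}),
        termProb y t S * r S m
        ≤ ∑ S ∈ ((nonempties N).filter (fun S => m ∈ S)).filter (fun S => S ≠ {m}),
          termProb y t S :=
      Finset.sum_le_sum fun S _ =>
        mul_le_of_le_one_right (termProb_nonneg hyv t S) (hr S m).2
    have hsum : ∑ S ∈ ((nonempties N).filter (fun S => m ∈ S)).filter (fun S => S ≠ {m}),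
        termProb y t S = Qs y t * (s t * σ) := by
      rw [Finset.filter_filter]
      simp only [termProb_eq]
      rw [← Finset.mul_sum, split_sum (fun k => y k t) m, hym, hcompl t, sub_sub_cancel]
    linarith
  have hfle : ∀ t, ∑ S ∈ nonempties N, termProb y t S * r S m
      ≤ max β 0 * (Qs y t * (1 - s t)) + σ * (Qs y t * s t) := by
    intro t
    rw [← Finset.sum_filter_add_sum_filter_not (nonempties N) (fun S => m ∈ S)
      (fun S => termProb y t S * r S m)]
    have h1 : Qs y t * (1 - s t) * β ≤ max β 0 * (Qs y t * (1 - s t)) := by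
      have := mul_le_mul_of_nonneg_left (le_max_left β 0)
        (mul_nonneg (hQn t) (by linarith [hs1 t] : (0:ℝ) ≤ 1 - s t))
      linarith
    have h2 := hB t
    rw [hA t]
    linarith
  -- bounds on the two auxiliary series
  have hv1nn : ∀ t, 0 ≤ Qs y t * (1 - s t) :=
    fun t => mul_nonneg (hQn t) (by linarith [hs1 t])
  have hv1partial : ∀ n, ∑ t ∈ Finset.range n, Qs y t * (1 - s t) ≤ 1/σ := by
    intro n
    rw [le_div_iff₀ hσ]
    have h1 : ∑ t ∈ Finset.range n, σ * (Qs y t * (1 - s t))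
        ≤ ∑ t ∈ Finset.range n, (Qs y t - Qs y (t+1)) :=
      Finset.sum_le_sum fun t _ => hQmono t
    rw [Finset.sum_range_sub' (Qs y) n, hQ0, ← Finset.mul_sum] at h1
    nlinarith [hQn n]
  have hv1summable : Summable (fun t => Qs y t * (1 - s t)) :=
    summable_of_sum_range_le hv1nn hv1partial
  have hv1sum : ∑' t, Qs y t * (1 - s t) ≤ 1/σ :=
    Summable.tsum_le_of_sum_range_le hv1summable hv1partial
  have hQleP : ∀ t, Qs y t ≤ ∏ u ∈ Finset.range t, (1 - s u) := by
    intro t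
    refine Finset.prod_le_prod (fun u _ => Finset.prod_nonneg fun k _ => by
      linarith [(hyv k u).2]) (fun u _ => ?_)
    rw [hprodall u]
    exact mul_le_of_le_one_right (by linarith [hs1 u]) (by linarith)
  have hPnn : ∀ t, 0 ≤ ∏ u ∈ Finset.range t, (1 - s u) :=
    fun t => Finset.prod_nonneg fun u _ => by linarith [hs1 u]
  have hv2nn : ∀ t, 0 ≤ Qs y t * s t := fun t => mul_nonneg (hQn t) (hs0 t)
  have hv2le : ∀ t, Qs y t * s t
      ≤ (∏ u ∈ Finset.range t, (1 - s u)) - ∏ u ∈ Finset.range (t+1), (1 - s u) := by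
    intro t
    rw [Finset.prod_range_succ]
    have := mul_le_mul_of_nonneg_right (hQleP t) (hs0 t)
    nlinarith [hPnn t]
  have hv2partial : ∀ n, ∑ t ∈ Finset.range n, Qs y t * s t ≤ 1 := by
    intro n
    have h1 : ∑ t ∈ Finset.range n, Qs y t * s t
        ≤ ∑ t ∈ Finset.range n, ((∏ u ∈ Finset.range t, (1 - s u))
            - ∏ u ∈ Finset.range (t+1), (1 - s u)) :=
      Finset.sum_le_sum fun t _ => hv2le t
    rw [Finset.sum_range_sub' (fun t => ∏ u ∈ Finset.range t, (1 - s u)) n] at h1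
    simp only [Finset.range_zero, Finset.prod_empty] at h1
    linarith [hPnn n]
  have hv2summable : Summable (fun t => Qs y t * s t) :=
    summable_of_sum_range_le hv2nn hv2partial
  have hv2sum : ∑' t, Qs y t * s t ≤ 1 :=
    Summable.tsum_le_of_sum_range_le hv2summable hv2partial
  -- put everything together
  have hpay : payoff r y m
      = (∑' t, ∑ S ∈ nonempties N, termProb y t S * r S m)
        + (1 - ∑' t, ∑ S ∈ nonempties N, termProb y t S) * r ∅ m := rfl
  rw [hpay, hgsum, sub_self, zero_mul, add_zero]
  have husummable : Summable (fun t =>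
      max β 0 * (Qs y t * (1 - s t)) + σ * (Qs y t * s t)) :=
    (hv1summable.mul_left _).add (hv2summable.mul_left _)
  have hftsum : ∑' t, ∑ S ∈ nonempties N, termProb y t S * r S m
      ≤ ∑' t, (max β 0 * (Qs y t * (1 - s t)) + σ * (Qs y t * s t)) :=
    Summable.tsum_le_tsum hfle hfsummable husummable
  rw [Summable.tsum_add (hv1summable.mul_left _) (hv2summable.mul_left _),
    tsum_mul_left, tsum_mul_left] at hftsum
  have hb1 : max β 0 * ∑' t, Qs y t * (1 - s t) ≤ max β 0 * (1/σ) :=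
    mul_le_mul_of_nonneg_left hv1sum (le_max_right β 0)
  have hb2 : σ * ∑' t, Qs y t * s t ≤ σ * 1 :=
    mul_le_mul_of_nonneg_left hv2sum (le_of_lt hσ)
  have : max β 0 * (1/σ) = max β 0 / σ := by ring
  linarith

/-- Exact payoff of a stationary profile with per-stage rates `a`. -/
lemma prof_eq (r : Finset (Fin N) → Fin N → ℝ) (a : Fin N → ℝ)
    (ha : ∀ k, a k ∈ Set.Icc (0 : ℝ) 1) (m : Fin N)
    (D : ℝ) (hDdef : D = 1 - ∏ k, (1 - a k)) (hD : 0 < D) :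
    payoff r (fun k _ => a k) m
      = (∑ S ∈ nonempties N, ((∏ k ∈ S, a k) * ∏ k ∈ Sᶜ, (1 - a k)) * r S m) / D := by
  have h1D : 1 - D = ∏ k, (1 - a k) := by rw [hDdef]; ring
  have h1D0 : (0:ℝ) ≤ 1 - D := by
    rw [h1D]; exact Finset.prod_nonneg fun k _ => by linarith [(ha k).2]
  have h1D1 : 1 - D < 1 := by linarith
  have hterm : ∀ t S, termProb (fun k _ => a k) t S
      = (1 - D)^t * ((∏ k ∈ S, a k) * ∏ k ∈ Sᶜ, (1 - a k)) := by
    intro t S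
    unfold termProb
    rw [show (∏ u ∈ Finset.range t, ∏ i : Fin N, (1 - a i)) = (1-D)^t by
      rw [Finset.prod_const, Finset.card_range, h1D]]
  have hf : ∑' t, ∑ S ∈ nonempties N, termProb (fun k _ => a k) t S * r S m
      = (∑ S ∈ nonempties N, ((∏ k ∈ S, a k) * ∏ k ∈ Sᶜ, (1 - a k)) * r S m) / D := by
    have e : ∀ t : ℕ, ∑ S ∈ nonempties N, termProb (fun k _ => a k) t S * r S m
        = (1-D)^t * ∑ S ∈ nonempties N, ((∏ k ∈ S, a k) * ∏ k ∈ Sᶜ, (1 - a k)) * r S m := by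
      intro t
      rw [Finset.mul_sum]
      exact Finset.sum_congr rfl fun S _ => by rw [hterm]; ring
    rw [tsum_congr e, tsum_mul_right, tsum_geometric_of_lt_one h1D0 h1D1,
      sub_sub_cancel, inv_mul_eq_div]
  have hg : ∑' t, ∑ S ∈ nonempties N, termProb (fun k _ => a k) t S = 1 := by
    have e : ∀ t : ℕ, ∑ S ∈ nonempties N, termProb (fun k _ => a k) t S = (1-D)^t * D := by
      intro t
      have e1 : ∑ S ∈ nonempties N, termProb (fun k _ => a k) t S
          = (1-D)^t * ∑ S ∈ nonempties N, (∏ k ∈ S, a k) * ∏ k ∈ Sᶜ, (1 - a k) := by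
        rw [Finset.mul_sum]; exact Finset.sum_congr rfl fun S _ => hterm t S
      rw [e1, stage_total, ← h1D, sub_sub_cancel]
    rw [tsum_congr e, tsum_mul_right, tsum_geometric_of_lt_one h1D0 h1D1, sub_sub_cancel,
      inv_mul_cancel₀ (ne_of_gt hD)]
  show (∑' t, ∑ S ∈ nonempties N, termProb (fun k _ => a k) t S * r S m)
      + (1 - ∑' t, ∑ S ∈ nonempties N, termProb (fun k _ => a k) t S) * r ∅ m = _
  rw [hf, hg, sub_self, zero_mul, add_zero]

/-- The full-profile weighted sum dominates the `m ∉ S` part, up to the `m`-joint terms. -/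
lemma tilde_ge (r : Finset (Fin N) → Fin N → ℝ)
    (hr : ∀ S k, r S k ∈ Set.Icc (-1 : ℝ) 1) (hdiag : ∀ k : Fin N, r {k} k = 0)
    (a : Fin N → ℝ) (ha : ∀ k, a k ∈ Set.Icc (0 : ℝ) 1) (m : Fin N) :
    (1 - a m) * (∑ S ∈ (nonempties N).filter (fun S => m ∉ S),
        ((∏ k ∈ S, a k) * ∏ k ∈ (Sᶜ : Finset (Fin N)).erase m, (1 - a k)) * r S m)
      - a m * (1 - ∏ k ∈ ({m}ᶜ : Finset (Fin N)), (1 - a k))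
    ≤ ∑ S ∈ nonempties N, ((∏ k ∈ S, a k) * ∏ k ∈ Sᶜ, (1 - a k)) * r S m := by
  have hcoeff_nn : ∀ S : Finset (Fin N), 0 ≤ (∏ k ∈ S, a k) * ∏ k ∈ Sᶜ, (1 - a k) :=
    fun S => mul_nonneg (Finset.prod_nonneg fun k _ => (ha k).1)
      (Finset.prod_nonneg fun k _ => by linarith [(ha k).2])
  rw [← Finset.sum_filter_add_sum_filter_not (nonempties N) (fun S => m ∈ S)
    (fun S => ((∏ k ∈ S, a k) * ∏ k ∈ Sᶜ, (1 - a k)) * r S m)]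
  have e1 : ∑ S ∈ (nonempties N).filter (fun S => m ∉ S),
      ((∏ k ∈ S, a k) * ∏ k ∈ Sᶜ, (1 - a k)) * r S m
      = (1 - a m) * ∑ S ∈ (nonempties N).filter (fun S => m ∉ S),
        ((∏ k ∈ S, a k) * ∏ k ∈ (Sᶜ : Finset (Fin N)).erase m, (1 - a k)) * r S m := by
    rw [Finset.mul_sum]
    refine Finset.sum_congr rfl fun S hS => ?_
    have hmS : m ∉ S := (Finset.mem_filter.1 hS).2
    have hmSc : m ∈ (Sᶜ : Finset (Fin N)) := Finset.mem_compl.2 hmS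
    rw [← Finset.mul_prod_erase _ _ hmSc]
    ring
  have e2 : - (a m * (1 - ∏ k ∈ ({m}ᶜ : Finset (Fin N)), (1 - a k)))
      ≤ ∑ S ∈ (nonempties N).filter (fun S => m ∈ S),
        ((∏ k ∈ S, a k) * ∏ k ∈ Sᶜ, (1 - a k)) * r S m := by
    have hsplit := Finset.sum_filter_add_sum_filter_not
      ((nonempties N).filter (fun S => m ∈ S)) (fun S => S ≠ {m})
      (fun S => ((∏ k ∈ S, a k) * ∏ k ∈ Sᶜ, (1 - a k)) * r S m)
    have hz : ∑ S ∈ ((nonempties N).filter (fun S => m ∈ S)).filter (fun S => ¬S ≠ {m}),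
        ((∏ k ∈ S, a k) * ∏ k ∈ Sᶜ, (1 - a k)) * r S m = 0 := by
      refine Finset.sum_eq_zero fun S hS => ?_
      have hSm : S = {m} := not_not.1 (Finset.mem_filter.1 hS).2
      rw [hSm, hdiag m, mul_zero]
    have hge : ∑ S ∈ ((nonempties N).filter (fun S => m ∈ S)).filter (fun S => S ≠ {m}),
        (-(((∏ k ∈ S, a k) * ∏ k ∈ Sᶜ, (1 - a k))))
        ≤ ∑ S ∈ ((nonempties N).filter (fun S => m ∈ S)).filter (fun S => S ≠ {m}),
          ((∏ k ∈ S, a k) * ∏ k ∈ Sᶜ, (1 - a k)) * r S m := by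
      refine Finset.sum_le_sum fun S _ => ?_
      nlinarith [hcoeff_nn S, (hr S m).1]
    rw [Finset.sum_neg_distrib, Finset.filter_filter, split_sum a m] at hge
    simp only [Finset.filter_filter] at hsplit hz
    linarith
  rw [e1]
  linarith

lemma beta_ge (r : Finset (Fin N) → Fin N → ℝ)
    (hr : ∀ S k, r S k ∈ Set.Icc (-1 : ℝ) 1)
    (a : Fin N → ℝ) (ha : ∀ k, a k ∈ Set.Icc (0 : ℝ) 1) (m : Fin N) :
    -(1 - ∏ k ∈ ({m}ᶜ : Finset (Fin N)), (1 - a k))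
    ≤ ∑ S ∈ (nonempties N).filter (fun S => m ∉ S),
        ((∏ k ∈ S, a k) * ∏ k ∈ (Sᶜ : Finset (Fin N)).erase m, (1 - a k)) * r S m := by
  rw [← coeff_sum a m, ← Finset.sum_neg_distrib]
  refine Finset.sum_le_sum fun S _ => ?_
  have hc : 0 ≤ (∏ k ∈ S, a k) * ∏ k ∈ (Sᶜ : Finset (Fin N)).erase m, (1 - a k) :=
    mul_nonneg (Finset.prod_nonneg fun k _ => (ha k).1)
      (Finset.prod_nonneg fun k _ => by linarith [(ha k).2])
  nlinarith [(hr S m).1]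

lemma prod_eq_pair (f : Fin N → ℝ) (i j : Fin N) (hij : i ≠ j) (A : Finset (Fin N))
    (hiA : i ∈ A) (hjA : j ∈ A) (hone : ∀ l ∈ A, l ≠ i → l ≠ j → f l = 1) :
    ∏ k ∈ A, f k = f i * f j := by
  rw [← Finset.prod_pair hij]
  refine (Finset.prod_subset ?_ ?_).symm
  · intro x hx
    rcases Finset.mem_insert.1 hx with h | h
    · exact h ▸ hiA
    · exact (Finset.mem_singleton.1 h) ▸ hjA
  · intro x hxA hxp
    refine hone x hxA (fun h => hxp ?_) (fun h => hxp ?_)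
    · subst h; simp
    · subst h; simp

lemma exists_ne_of_ne_singleton (c : Fin N) {S : Finset (Fin N)} (hne : S ≠ ∅)
    (hS : S ≠ {c}) : ∃ l ∈ S, l ≠ c := by
  by_contra hcon
  push_neg at hcon
  have hsub : S ⊆ {c} := fun l hl => Finset.mem_singleton.2 (hcon l hl)
  rcases Finset.subset_singleton_iff.1 hsub with h | h
  · exact hne h
  · exact hS h


end QGaux

open QGaux

set_option maxHeartbeats 1600000 in
/-- **If there is a normal player `i` whose quitting-alone payoff vector `r^i` is
nonnegative in every coordinate, then the quitting game admits a stationary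
`ε`-equilibrium, for every `ε > 0`.** -/
theorem quitting_game_stationary_equilibrium_of_normal_nonneg
    (N : ℕ) (hN : 1 ≤ N)
    (r : Finset (Fin N) → Fin N → ℝ)
    (hr : ∀ S i, r S i ∈ Set.Icc (-1 : ℝ) 1)
    (hdiag : ∀ i : Fin N, r {i} i = 0)
    (i : Fin N) (hi : i ∈ normalPlayers r)
    (hpos : ∀ j : Fin N, 0 ≤ r {i} j)
    (ε : ℝ) (hε : 0 < ε) :
    ∃ x : Fin N → ℕ → ℝ, (∀ i t, x i t = x i 0) ∧ IsEpsEquilibrium r x ε := by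
  classical
  -- extract the punisher j
  have hi1 : i ∈ normalLevel r 1 := Set.mem_iInter.1 hi 1
  obtain ⟨-, j, -, hji, hrji⟩ :
      i ∈ normalLevel r 0 ∧ ∃ j ∈ normalLevel r 0, j ≠ i ∧ r {j} i ≤ 0 := hi1
  have hij : i ≠ j := hji.symm
  -- the small probabilities
  set π : ℝ := min (ε/3) (1/2) with hπdef
  have hπ0 : 0 < π := lt_min (by linarith) (by norm_num)
  have hπhalf : π ≤ 1/2 := min_le_right _ _
  have hπε : 3 * π ≤ ε := by
    have := min_le_left (ε/3) (1/2); rw [← hπdef] at this; linarith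
  set η : ℝ := π * (min ε 3) / 3 with hηdef
  have hmin3 : 0 < min ε 3 := lt_min hε (by norm_num)
  have hη0 : 0 < η := by rw [hηdef]; positivity
  have hηπ : η ≤ π := by
    rw [hηdef]
    have h1 : min ε 3 ≤ 3 := min_le_right _ _
    nlinarith
  have h3η : 3 * η ≤ π * ε := by
    rw [hηdef]
    have h1 : min ε 3 ≤ ε := min_le_left _ _
    nlinarith
  have hη1 : η ≤ 1 := by linarith
  have hηdivπ : η / π ≤ ε / 3 := by
    rw [div_le_div_iff₀ hπ0 (by norm_num : (0:ℝ) < 3)]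
    linarith
  have hπ2η : π * π ≤ η := by
    rw [hηdef]
    have h1 : 3 * π ≤ min ε 3 := le_min (by linarith) (by linarith)
    nlinarith
  -- the stationary profile
  set a : Fin N → ℝ := fun k => if k = i then π else if k = j then η else 0 with hadef
  have hai : a i = π := by simp [hadef]
  have haj : a j = η := by simp [hadef, hji]
  have hao : ∀ l, l ≠ i → l ≠ j → a l = 0 := fun l h1 h2 => by simp [hadef, h1, h2]
  have ha : ∀ k, a k ∈ Set.Icc (0:ℝ) 1 := by
    intro k
    by_cases h1 : k = i
    · subst h1; rw [hai]; exact ⟨le_of_lt hπ0, by linarith⟩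
    by_cases h2 : k = j
    · subst h2; rw [haj]; exact ⟨le_of_lt hη0, hη1⟩
    · rw [hao k h1 h2]; exact ⟨le_refl 0, by norm_num⟩
  set D : ℝ := 1 - (1-π)*(1-η) with hDdef
  have hD_eq : D = π + η - π*η := by rw [hDdef]; ring
  have hDπ : π ≤ D := by nlinarith
  have hD0 : 0 < D := lt_of_lt_of_le hπ0 hDπ
  have hDle : D ≤ π + η := by nlinarith
  have hηdivD : η / D ≤ ε / 3 :=
    le_trans (div_le_div_of_nonneg_left (le_of_lt hη0) hπ0 hDπ) hηdivπ
  have hprod_univ : ∏ k, (1 - a k) = (1-π)*(1-η) := by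
    have := prod_eq_pair (fun k => 1 - a k) i j hij Finset.univ (Finset.mem_univ i)
      (Finset.mem_univ j) (fun l _ h1 h2 => by show 1 - a l = 1; rw [hao l h1 h2]; ring)
    simpa [hai, haj] using this
  have hDdef' : D = 1 - ∏ k, (1 - a k) := by rw [hprod_univ]
  refine ⟨fun k _ => a k, fun k t => rfl, fun k t => ha k, ?_⟩
  intro m s hs
  have hprof := prof_eq r a ha m D hDdef' hD0
  set βt : ℝ := ∑ S ∈ nonempties N, ((∏ k ∈ S, a k) * ∏ k ∈ Sᶜ, (1 - a k)) * r S m with hβt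
  set β : ℝ := ∑ S ∈ (nonempties N).filter (fun S => m ∉ S),
      ((∏ k ∈ S, a k) * ∏ k ∈ (Sᶜ : Finset (Fin N)).erase m, (1 - a k)) * r S m with hβ
  have htilde := tilde_ge r hr hdiag a ha m
  rw [← hβt, ← hβ] at htilde
  by_cases hmi : m = i
  · -- deviation by the main quitter i
    subst hmi
    have hσi : ∏ k ∈ ({m}ᶜ : Finset (Fin N)), (1 - a k) = 1 - η := by
      rw [Finset.prod_eq_single j (fun l hl hlj => by
          rw [hao l (by simpa using Finset.mem_compl.1 hl) hlj]; ring)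
        (fun hj => absurd (Finset.mem_compl.2 (by simpa using hji)) hj)]
      rw [haj]
    have hdev := payoff_le r hr hdiag a ha m s hs η (by rw [hσi]; ring) hη0
    rw [← hβ] at hdev
    have hβ0 : β ≤ 0 := by
      rw [hβ]
      refine Finset.sum_nonpos fun S hS => ?_
      obtain ⟨hSne, hSm⟩ := Finset.mem_filter.1 hS
      rw [mem_nonempties] at hSne
      by_cases hSj : S = {j}
      · subst hSj
        have hc : 0 ≤ (∏ k ∈ ({j}:Finset (Fin N)), a k)
            * ∏ k ∈ (({j}:Finset (Fin N))ᶜ : Finset (Fin N)).erase m, (1 - a k) :=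
          mul_nonneg (Finset.prod_nonneg fun k _ => (ha k).1)
            (Finset.prod_nonneg fun k _ => by linarith [(ha k).2])
        nlinarith [hrji]
      · obtain ⟨l, hlS, hlj⟩ := exists_ne_of_ne_singleton j hSne hSj
        have hli : l ≠ m := fun h => hSm (h ▸ hlS)
        rw [Finset.prod_eq_zero hlS (hao l hli hlj), zero_mul, zero_mul]
    have hβlow : -η ≤ β := by
      have hb := beta_ge r hr a ha m
      rw [← hβ, hσi] at hb
      linarith
    have hmax : max β 0 = 0 := max_eq_right hβ0
    rw [hmax, zero_div, zero_add] at hdev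
    have htl : (1 - π) * β - π * η ≤ βt := by
      rw [hσi, hai] at htilde
      have e : 1 - (1 - η) = η := by ring
      rw [e] at htilde
      exact htilde
    have hβtlow : -η ≤ βt := by
      have h := mul_le_mul_of_nonneg_left hβlow (show (0:ℝ) ≤ 1-π by linarith)
      nlinarith
    have hproflow : -(η/D) ≤ payoff r (fun k _ => a k) m := by
      rw [hprof]
      have h1 : -η / D ≤ βt / D := (div_le_div_iff_of_pos_right hD0).2 hβtlow
      rw [neg_div] at h1
      exact h1
    have hηε3 : η ≤ ε / 3 := by linarith
    linarith [hdev, hproflow, hηdivD]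
  by_cases hmj : m = j
  · -- deviation by the punisher j
    subst hmj
    have hσj : ∏ k ∈ ({m}ᶜ : Finset (Fin N)), (1 - a k) = 1 - π := by
      rw [Finset.prod_eq_single i (fun l hl hli => by
          rw [hao l hli (by simpa using Finset.mem_compl.1 hl)]; ring)
        (fun hii => absurd (Finset.mem_compl.2 (by simpa using hij)) hii)]
      rw [hai]
    have hdev := payoff_le r hr hdiag a ha m s hs π (by rw [hσj]; ring) hπ0
    rw [← hβ] at hdev
    have hβj : β = π * r {i} m := by
      rw [hβ]
      rw [Finset.sum_eq_single_of_mem ({i} : Finset (Fin N))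
        (Finset.mem_filter.2 ⟨mem_nonempties.2 (Finset.singleton_ne_empty i),
          by simpa using hji⟩)
        (fun S hS hSne => by
          obtain ⟨hSne0, hSm⟩ := Finset.mem_filter.1 hS
          rw [mem_nonempties] at hSne0
          obtain ⟨l, hlS, hli⟩ := exists_ne_of_ne_singleton i hSne0 hSne
          have hlj : l ≠ m := fun h => hSm (h ▸ hlS)
          rw [Finset.prod_eq_zero hlS (hao l hli hlj), zero_mul, zero_mul])]
      have hone : ∏ k ∈ (({i}:Finset (Fin N))ᶜ : Finset (Fin N)).erase m, (1 - a k) = 1 :=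
        Finset.prod_eq_one fun l hl => by
          obtain ⟨hlj, hlc⟩ := Finset.mem_erase.1 hl
          rw [hao l (by simpa using Finset.mem_compl.1 hlc) hlj]; ring
      rw [Finset.prod_singleton, hai, hone, mul_one]
    have hR0 : 0 ≤ r {i} m := hpos _
    have hR1 : r {i} m ≤ 1 := (hr _ _).2
    have hmax : max β 0 = π * r {i} m := by
      rw [hβj]; exact max_eq_left (by positivity)
    rw [hmax] at hdev
    have hcancel : π * r {i} m / π = r {i} m := by field_simp
    rw [hcancel] at hdev
    have htl2 : (1 - η) * β - η * π ≤ βt := by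
      rw [hσj, haj] at htilde
      have e : 1 - (1 - π) = π := by ring
      rw [e] at htilde
      exact htilde
    have hβtlow : (1-η) * (π * r {i} m) - η * π ≤ βt := by rw [← hβj]; exact htl2
    have hprofge : ((1-η) * (π * r {i} m) - η * π) / D ≤ payoff r (fun k _ => a k) m := by
      rw [hprof]
      exact (div_le_div_iff_of_pos_right hD0).2 hβtlow
    have hkey : r {i} m + π - ε ≤ ((1-η) * (π * r {i} m) - η * π) / D := by
      rw [le_div_iff₀ hD0, hD_eq]
      nlinarith [mul_nonneg (sub_nonneg.2 hR1) (le_of_lt hη0),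
        mul_nonneg (by linarith : (0:ℝ) ≤ ε - 3*π)
          (by linarith : (0:ℝ) ≤ π + η - π*η - π),
        mul_nonneg (le_of_lt hπ0) (by linarith : (0:ℝ) ≤ ε - 3*π),
        mul_le_mul_of_nonneg_left hπhalf (le_of_lt hη0)]
    linarith [hdev, hprofge, hkey]
  · -- deviation by a bystander
    have ham : a m = 0 := hao m hmi hmj
    have himc : i ∈ ({m}ᶜ : Finset (Fin N)) :=
      Finset.mem_compl.2 (fun hmem => hmi (Finset.mem_singleton.1 hmem).symm)
    have hjmc : j ∈ ({m}ᶜ : Finset (Fin N)) :=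
      Finset.mem_compl.2 (fun hmem => hmj (Finset.mem_singleton.1 hmem).symm)
    have hσm : ∏ k ∈ ({m}ᶜ : Finset (Fin N)), (1 - a k) = (1-π)*(1-η) := by
      have := prod_eq_pair (fun k => 1 - a k) i j hij ({m}ᶜ : Finset (Fin N)) himc hjmc
        (fun l _ h1 h2 => by show 1 - a l = 1; rw [hao l h1 h2]; ring)
      simpa [hai, haj] using this
    have hdev := payoff_le r hr hdiag a ha m s hs D (by rw [hσm]) hD0
    rw [← hβ] at hdev
    have hβtβ : β ≤ βt := by
      rw [ham] at htilde
      have e1 : (1 - 0) * β - 0 * (1 - ∏ k ∈ ({m}ᶜ : Finset (Fin N)), (1 - a k)) = β := by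
        ring
      rw [e1] at htilde
      exact htilde
    have hImem : ({i} : Finset (Fin N)) ∈ (nonempties N).filter (fun S => m ∉ S) :=
      Finset.mem_filter.2 ⟨mem_nonempties.2 (Finset.singleton_ne_empty i),
        by simpa using hmi⟩
    have hcoeffi : (∏ k ∈ ({i}:Finset (Fin N)), a k)
        * ∏ k ∈ (({i}:Finset (Fin N))ᶜ : Finset (Fin N)).erase m, (1 - a k)
        = π * (1-η) := by
      rw [Finset.prod_singleton, hai]
      congr 1
      rw [Finset.prod_eq_single j (fun l hl hlj => by
          obtain ⟨hlm, hlc⟩ := Finset.mem_erase.1 hl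
          rw [hao l (by simpa using Finset.mem_compl.1 hlc) hlj]; ring)
        (fun hj => absurd (Finset.mem_erase.2 ⟨fun h => hmj h.symm,
          Finset.mem_compl.2 (by simpa using hji)⟩) hj)]
      rw [haj]
    have hβlow : -η ≤ β := by
      have hsum := coeff_sum a m
      rw [hσm] at hsum
      have hsplit := Finset.sum_erase_add ((nonempties N).filter (fun S => m ∉ S))
        (fun S => ((∏ k ∈ S, a k) * ∏ k ∈ (Sᶜ : Finset (Fin N)).erase m, (1 - a k)) * r S m)
        hImem
      have hsplitc := Finset.sum_erase_add ((nonempties N).filter (fun S => m ∉ S))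
        (fun S => (∏ k ∈ S, a k) * ∏ k ∈ (Sᶜ : Finset (Fin N)).erase m, (1 - a k)) hImem
      rw [← hβ] at hsplit
      rw [hcoeffi] at hsplit hsplitc
      rw [hsum] at hsplitc
      -- term at {i} is nonnegative
      have hterm_nn : 0 ≤ π * (1-η) * r {i} m :=
        mul_nonneg (mul_nonneg (le_of_lt hπ0) (by linarith)) (hpos m)
      have hec : ∑ S ∈ ((nonempties N).filter (fun S => m ∉ S)).erase {i},
          (∏ k ∈ S, a k) * ∏ k ∈ (Sᶜ : Finset (Fin N)).erase m, (1 - a k) = η := by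
        have he : (1:ℝ) - (1-π)*(1-η) - π*(1-η) = η := by ring
        linarith [hsplitc]
      have hge : -(∑ S ∈ ((nonempties N).filter (fun S => m ∉ S)).erase {i},
            (∏ k ∈ S, a k) * ∏ k ∈ (Sᶜ : Finset (Fin N)).erase m, (1 - a k))
          ≤ ∑ S ∈ ((nonempties N).filter (fun S => m ∉ S)).erase {i},
            ((∏ k ∈ S, a k) * ∏ k ∈ (Sᶜ : Finset (Fin N)).erase m, (1 - a k)) * r S m := by
        rw [← Finset.sum_neg_distrib]
        refine Finset.sum_le_sum fun S _ => ?_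
        have hc : 0 ≤ (∏ k ∈ S, a k) * ∏ k ∈ (Sᶜ : Finset (Fin N)).erase m, (1 - a k) :=
          mul_nonneg (Finset.prod_nonneg fun k _ => (ha k).1)
            (Finset.prod_nonneg fun k _ => by linarith [(ha k).2])
        nlinarith [(hr S m).1]
      rw [hec] at hge
      linarith [hsplit, hterm_nn, hge]
    have hmax2 : max β 0 ≤ β + η := max_le (by linarith) (by linarith)
    have hdev2 : payoff r (Function.update (fun k _ => a k) m s) m ≤ (β + η)/D + D :=
      le_trans hdev (by
        have h := (div_le_div_iff_of_pos_right hD0).2 hmax2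
        linarith)
    have hprofge : β / D ≤ payoff r (fun k _ => a k) m := by
      rw [hprof]; exact (div_le_div_iff_of_pos_right hD0).2 hβtβ
    have hadd : (β + η)/D = β/D + η/D := add_div β η D
    have hDε : D ≤ 2*ε/3 := by linarith
    linarith [hdev2, hprofge, hηdivD]


end
end

section
/- In a quitting game, if all players are abnormal (that is, the set of normal players I_* is empty), then for every ε > 0 the game admits a stationary ε-equilibrium. -/
noncomputable section

namespace QG


open Finset

variable {N : ℕ}

/-! ### sequence lemmas -/

lemma sum_range_surv (d : ℕ → ℝ) (T : ℕ) :
    ∑ t ∈ Finset.range T, (∏ u ∈ Finset.range t, d u) * (1 - d t)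
      = 1 - ∏ u ∈ Finset.range T, d u := by
  induction T with
  | zero => simp
  | succ n ih => rw [Finset.sum_range_succ, Finset.prod_range_succ, ih]; ring

section seq
variable {d : ℕ → ℝ} (hd : ∀ t, d t ∈ Set.Icc (0:ℝ) 1)
include hd

lemma prod_range_mem (T : ℕ) : (∏ u ∈ Finset.range T, d u) ∈ Set.Icc (0:ℝ) 1 :=
  ⟨Finset.prod_nonneg fun u _ => (hd u).1,
   Finset.prod_le_one (fun u _ => (hd u).1) (fun u _ => (hd u).2)⟩

lemma surv_nonneg (t : ℕ) : 0 ≤ (∏ u ∈ Finset.range t, d u) * (1 - d t) :=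
  mul_nonneg (prod_range_mem hd t).1 (by linarith [(hd t).2])

lemma summable_surv : Summable (fun t => (∏ u ∈ Finset.range t, d u) * (1 - d t)) :=
  summable_of_sum_range_le (c := 1) (surv_nonneg hd)
    (fun n => by rw [sum_range_surv]; linarith [(prod_range_mem hd n).1])

lemma tsum_surv_le : (∑' t, (∏ u ∈ Finset.range t, d u) * (1 - d t)) ≤ 1 :=
  Summable.tsum_le_of_sum_range_le (summable_surv hd)
    (fun n => by rw [sum_range_surv]; linarith [(prod_range_mem hd n).1])

lemma tsum_surv_nonneg : 0 ≤ (∑' t, (∏ u ∈ Finset.range t, d u) * (1 - d t)) :=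
  tsum_nonneg (surv_nonneg hd)

lemma tsum_surv_eq (β : ℝ) (hβ : β < 1) (hdβ : ∀ t, d t ≤ β) :
    (∑' t, (∏ u ∈ Finset.range t, d u) * (1 - d t)) = 1 := by
  refine le_antisymm (tsum_surv_le hd) ?_
  have hβ0 : 0 ≤ β := le_trans (hd 0).1 (hdβ 0)
  have h1 : ∀ T : ℕ, 1 - β ^ T ≤ ∑' t, (∏ u ∈ Finset.range t, d u) * (1 - d t) := by
    intro T
    have h2 : ∑ t ∈ Finset.range T, (∏ u ∈ Finset.range t, d u) * (1 - d t)
        ≤ ∑' t, (∏ u ∈ Finset.range t, d u) * (1 - d t) :=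
      Summable.sum_le_tsum _ (fun t _ => surv_nonneg hd t) (summable_surv hd)
    rw [sum_range_surv] at h2
    have h3 : (∏ u ∈ Finset.range T, d u) ≤ β ^ T := by
      calc (∏ u ∈ Finset.range T, d u) ≤ ∏ u ∈ Finset.range T, β :=
        Finset.prod_le_prod (fun u _ => (hd u).1) (fun u _ => hdβ u)
      _ = β ^ T := by rw [Finset.prod_const, Finset.card_range]
    linarith
  have h4 : Filter.Tendsto (fun T : ℕ => 1 - β ^ T) Filter.atTop (nhds 1) := by
    have := tendsto_pow_atTop_nhds_zero_of_lt_one hβ0 hβ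
    simpa using Filter.Tendsto.const_sub 1 this
  exact le_of_tendsto h4 (Filter.Eventually.of_forall h1)

end seq

/-! ### profile lemmas -/

def Dt (y : Fin N → ℕ → ℝ) (t : ℕ) : ℝ := ∏ i, (1 - y i t)

def Pt (y : Fin N → ℕ → ℝ) (t : ℕ) : ℝ := ∏ u ∈ Finset.range t, Dt y u

def eS (y : Fin N → ℕ → ℝ) (t : ℕ) (S : Finset (Fin N)) : ℝ :=
  (∏ i ∈ S, y i t) * ∏ i ∈ Sᶜ, (1 - y i t)

lemma termProb_eq (y : Fin N → ℕ → ℝ) (t : ℕ) (S : Finset (Fin N)) :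
    termProb y t S = Pt y t * eS y t S := rfl

lemma mem_nonempties {S : Finset (Fin N)} : S ∈ nonempties N ↔ S ≠ ∅ := by
  simp [nonempties]

section profile
variable {y : Fin N → ℕ → ℝ} (hy : ∀ i t, y i t ∈ Set.Icc (0:ℝ) 1)
include hy

lemma one_sub_mem (i : Fin N) (t : ℕ) : (1 - y i t) ∈ Set.Icc (0:ℝ) 1 := by
  constructor <;> [linarith [(hy i t).2]; linarith [(hy i t).1]]

lemma Dt_mem (t : ℕ) : Dt y t ∈ Set.Icc (0:ℝ) 1 :=
  ⟨Finset.prod_nonneg fun i _ => (one_sub_mem hy i t).1,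
   Finset.prod_le_one (fun i _ => (one_sub_mem hy i t).1) (fun i _ => (one_sub_mem hy i t).2)⟩

lemma Dt_le (i0 : Fin N) (t : ℕ) : Dt y t ≤ 1 - y i0 t := by
  rw [Dt, ← Finset.mul_prod_erase _ _ (Finset.mem_univ i0)]
  exact mul_le_of_le_one_right (one_sub_mem hy i0 t).1
    (Finset.prod_le_one (fun i _ => (one_sub_mem hy i t).1) (fun i _ => (one_sub_mem hy i t).2))

lemma Pt_mem (t : ℕ) : Pt y t ∈ Set.Icc (0:ℝ) 1 := prod_range_mem (Dt_mem hy) t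

lemma Pt_le_prod (c : ℕ → ℝ) (h : ∀ u, Dt y u ≤ c u) (t : ℕ) :
    Pt y t ≤ ∏ u ∈ Finset.range t, c u :=
  Finset.prod_le_prod (fun u _ => (Dt_mem hy u).1) (fun u _ => h u)

lemma Pt_le_pow (β : ℝ) (h : ∀ u, Dt y u ≤ β) (t : ℕ) : Pt y t ≤ β ^ t := by
  calc Pt y t ≤ ∏ u ∈ Finset.range t, β := Pt_le_prod hy _ h t
  _ = β ^ t := by rw [Finset.prod_const, Finset.card_range]

lemma eS_nonneg (t : ℕ) (S : Finset (Fin N)) : 0 ≤ eS y t S :=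
  mul_nonneg (Finset.prod_nonneg fun i _ => (hy i t).1)
    (Finset.prod_nonneg fun i _ => (one_sub_mem hy i t).1)

omit hy in
lemma sum_eS (t : ℕ) : ∑ S ∈ nonempties N, eS y t S = 1 - Dt y t := by
  have h := Finset.prod_add (fun i => y i t) (fun i => 1 - y i t) Finset.univ
  simp only [add_sub_cancel, Finset.prod_const_one, Finset.powerset_univ] at h
  have h2 : ∀ S : Finset (Fin N), (∏ i ∈ S, y i t) * ∏ i ∈ Finset.univ \ S, (1 - y i t)
      = eS y t S := by
    intro S; rw [eS, ← Finset.compl_eq_univ_sdiff]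
  rw [Finset.sum_congr rfl (fun S _ => h2 S)] at h
  have h3 := Finset.sum_filter_add_sum_filter_not Finset.univ
    (fun S : Finset (Fin N) => S ≠ ∅) (fun S => eS y t S)
  rw [← h] at h3
  have h4 : Finset.filter (fun S : Finset (Fin N) => ¬S ≠ ∅) Finset.univ = {∅} := by
    ext S; simp [Finset.mem_filter]
  rw [h4] at h3
  have h5 : eS y t ∅ = Dt y t := by
    rw [eS, Finset.prod_empty, Finset.compl_empty, one_mul]; rfl
  rw [Finset.sum_singleton, h5] at h3
  rw [nonempties]; linarith

lemma eS_le (t : ℕ) {S : Finset (Fin N)} (hS : S ∈ nonempties N) : eS y t S ≤ 1 - Dt y t := by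
  rw [← sum_eS (y := y) t]
  exact Finset.single_le_sum (fun S _ => eS_nonneg hy t S) hS

lemma summable_PD : Summable (fun t => Pt y t * (1 - Dt y t)) := summable_surv (Dt_mem hy)

lemma tsum_PD_le : (∑' t, Pt y t * (1 - Dt y t)) ≤ 1 := tsum_surv_le (Dt_mem hy)

lemma tsum_PD_nonneg : 0 ≤ (∑' t, Pt y t * (1 - Dt y t)) := tsum_surv_nonneg (Dt_mem hy)

end profile

/-! ### payoff bounds -/

section payoffs
variable (r : Finset (Fin N) → Fin N → ℝ) {y : Fin N → ℕ → ℝ}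
  (hy : ∀ i t, y i t ∈ Set.Icc (0:ℝ) 1)
  (hr : ∀ S i, r S i ∈ Set.Icc (-1:ℝ) 1)

include hy hr

omit hy hr in
lemma payoff_eq (i : Fin N) :
    payoff r y i = (∑' t, Pt y t * (∑ S ∈ nonempties N, eS y t S * r S i))
      + (1 - ∑' t, Pt y t * (1 - Dt y t)) * r ∅ i := by
  have h1 : (∑' t : ℕ, ∑ S ∈ nonempties N, termProb y t S * r S i)
      = ∑' t, Pt y t * (∑ S ∈ nonempties N, eS y t S * r S i) := by
    refine tsum_congr fun t => ?_
    rw [Finset.mul_sum]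
    exact Finset.sum_congr rfl fun S _ => by rw [termProb_eq, mul_assoc]
  have h2 : (∑' t : ℕ, ∑ S ∈ nonempties N, termProb y t S)
      = ∑' t, Pt y t * (1 - Dt y t) := by
    refine tsum_congr fun t => ?_
    rw [← sum_eS (y := y) t, Finset.mul_sum]
    exact Finset.sum_congr rfl fun S _ => by rw [termProb_eq]
  rw [payoff, h1, h2]

lemma stage_abs_le (i : Fin N) (t : ℕ) :
    |∑ S ∈ nonempties N, eS y t S * r S i| ≤ 1 - Dt y t := by
  calc |∑ S ∈ nonempties N, eS y t S * r S i| ≤ ∑ S ∈ nonempties N, |eS y t S * r S i| :=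
      Finset.abs_sum_le_sum_abs _ _
  _ ≤ ∑ S ∈ nonempties N, eS y t S := by
      refine Finset.sum_le_sum fun S _ => ?_
      rw [abs_mul, abs_of_nonneg (eS_nonneg hy t S)]
      have h1 : |r S i| ≤ 1 := abs_le.2 ⟨(hr S i).1, (hr S i).2⟩
      nlinarith [eS_nonneg hy t S, abs_nonneg (r S i)]
  _ = 1 - Dt y t := sum_eS t

omit hr in
lemma summable_Pf {f : ℕ → ℝ} (hf : ∀ t, |f t| ≤ Pt y t * (1 - Dt y t)) : Summable f :=
  Summable.of_norm_bounded (summable_PD hy) (fun t => by rw [Real.norm_eq_abs]; exact hf t)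

/-- two tracked singletons -/
lemma payoff_near₂ (a b : Fin N) (hab : a ≠ b) (i : Fin N) :
    |payoff r y i
        - ((∑' t, Pt y t * eS y t {a}) * r {a} i + (∑' t, Pt y t * eS y t {b}) * r {b} i
            + (1 - ∑' t, Pt y t * (1 - Dt y t)) * r ∅ i)|
      ≤ ∑' t, Pt y t * (1 - Dt y t - eS y t {a} - eS y t {b}) := by
  have hamem : ({a} : Finset (Fin N)) ∈ nonempties N := mem_nonempties.2 (Finset.singleton_ne_empty a)
  have hbmem : ({b} : Finset (Fin N)) ∈ nonempties N := mem_nonempties.2 (Finset.singleton_ne_empty b)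
  have habs : ({a} : Finset (Fin N)) ≠ {b} := fun h => hab (Finset.singleton_injective h)
  -- decomposition of the stage sum
  set s2 := (((nonempties N).erase {a}).erase {b}) with hs2
  have hbmem2 : ({b} : Finset (Fin N)) ∈ (nonempties N).erase {a} :=
    Finset.mem_erase.2 ⟨fun h => habs h.symm, hbmem⟩
  have hdecomp : ∀ g : Finset (Fin N) → ℝ, ∑ S ∈ nonempties N, g S
      = ∑ S ∈ s2, g S + g {b} + g {a} := by
    intro g
    rw [← Finset.sum_erase_add _ _ hamem, ← Finset.sum_erase_add _ _ hbmem2]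
  have hrest_nonneg : ∀ t, 0 ≤ 1 - Dt y t - eS y t {a} - eS y t {b} := by
    intro t
    have h := hdecomp (eS y t)
    rw [sum_eS] at h
    have h2 : 0 ≤ ∑ S ∈ s2, eS y t S := Finset.sum_nonneg fun S _ => eS_nonneg hy t S
    linarith
  have hstage : ∀ t, |(∑ S ∈ nonempties N, eS y t S * r S i)
      - (eS y t {a} * r {a} i + eS y t {b} * r {b} i)|
      ≤ 1 - Dt y t - eS y t {a} - eS y t {b} := by
    intro t
    have h := hdecomp (fun S => eS y t S * r S i)
    have h2 : (∑ S ∈ nonempties N, eS y t S * r S i)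
        - (eS y t {a} * r {a} i + eS y t {b} * r {b} i) = ∑ S ∈ s2, eS y t S * r S i := by
      rw [h]; ring
    rw [h2]
    have hE := hdecomp (eS y t)
    rw [sum_eS] at hE
    calc |∑ S ∈ s2, eS y t S * r S i| ≤ ∑ S ∈ s2, |eS y t S * r S i| :=
        Finset.abs_sum_le_sum_abs _ _
    _ ≤ ∑ S ∈ s2, eS y t S := by
        refine Finset.sum_le_sum fun S _ => ?_
        rw [abs_mul, abs_of_nonneg (eS_nonneg hy t S)]
        have h1 : |r S i| ≤ 1 := abs_le.2 ⟨(hr S i).1, (hr S i).2⟩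
        nlinarith [eS_nonneg hy t S, abs_nonneg (r S i)]
    _ = 1 - Dt y t - eS y t {a} - eS y t {b} := by linarith
  -- summabilities
  have hPmem := Pt_mem hy
  have hDmem := Dt_mem hy
  have hbound : ∀ (c : Finset (Fin N)), c ∈ nonempties N →
      Summable (fun t => Pt y t * eS y t c * r c i) := by
    intro c hc
    refine summable_Pf hy fun t => ?_
    rw [abs_mul, abs_mul, abs_of_nonneg (hPmem t).1, abs_of_nonneg (eS_nonneg hy t c)]
    have h1 : |r c i| ≤ 1 := abs_le.2 ⟨(hr c i).1, (hr c i).2⟩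
    have h2 := eS_le hy t hc
    have h3 := eS_nonneg hy t c
    calc Pt y t * eS y t c * |r c i| ≤ Pt y t * eS y t c :=
        mul_le_of_le_one_right (mul_nonneg (hPmem t).1 h3) h1
    _ ≤ Pt y t * (1 - Dt y t) := mul_le_mul_of_nonneg_left h2 (hPmem t).1
  have hsuma : Summable (fun t => Pt y t * eS y t {a} * r {a} i) := hbound _ hamem
  have hsumb : Summable (fun t => Pt y t * eS y t {b} * r {b} i) := hbound _ hbmem
  have hsumrest : Summable (fun t => Pt y t * (1 - Dt y t - eS y t {a} - eS y t {b})) := by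
    refine summable_Pf hy fun t => ?_
    rw [abs_mul, abs_of_nonneg (hPmem t).1, abs_of_nonneg (hrest_nonneg t)]
    have := eS_nonneg hy t ({a} : Finset (Fin N))
    have := eS_nonneg hy t ({b} : Finset (Fin N))
    nlinarith [(hPmem t).1, (hPmem t).2]
  have hsumF : Summable (fun t => Pt y t * (∑ S ∈ nonempties N, eS y t S * r S i)) := by
    refine summable_Pf hy fun t => ?_
    rw [abs_mul, abs_of_nonneg (hPmem t).1]
    have h1 := stage_abs_le r hy hr i t
    nlinarith [(hPmem t).1, (hPmem t).2, abs_nonneg (∑ S ∈ nonempties N, eS y t S * r S i)]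
  -- the remainder sequence
  set G := fun t => Pt y t * (∑ S ∈ nonempties N, eS y t S * r S i)
    - Pt y t * eS y t {a} * r {a} i - Pt y t * eS y t {b} * r {b} i with hG
  have hGabs : ∀ t, |G t| ≤ Pt y t * (1 - Dt y t - eS y t {a} - eS y t {b}) := by
    intro t
    have h1 : G t = Pt y t * ((∑ S ∈ nonempties N, eS y t S * r S i)
        - (eS y t {a} * r {a} i + eS y t {b} * r {b} i)) := by rw [hG]; ring
    rw [h1, abs_mul, abs_of_nonneg (hPmem t).1]
    exact mul_le_mul_of_nonneg_left (hstage t) (hPmem t).1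
  have hsumG : Summable G := by
    refine summable_Pf hy fun t => ?_
    refine le_trans (hGabs t) ?_
    refine mul_le_mul_of_nonneg_left ?_ (hPmem t).1
    have := eS_nonneg hy t ({a} : Finset (Fin N))
    have := eS_nonneg hy t ({b} : Finset (Fin N))
    linarith
  have htsumF : (∑' t, Pt y t * (∑ S ∈ nonempties N, eS y t S * r S i))
      = (∑' t, Pt y t * eS y t {a} * r {a} i) + (∑' t, Pt y t * eS y t {b} * r {b} i)
        + ∑' t, G t := by
    rw [← Summable.tsum_add hsuma hsumb, ← Summable.tsum_add (hsuma.add hsumb) hsumG]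
    exact tsum_congr fun t => by rw [hG]; ring
  have habstsum : |∑' t, G t| ≤ ∑' t, Pt y t * (1 - Dt y t - eS y t {a} - eS y t {b}) := by
    calc |∑' t, G t| ≤ ∑' t, |G t| := by
          have := norm_tsum_le_tsum_norm (f := G) (by
            simpa [Real.norm_eq_abs] using hsumG.abs)
          simpa [Real.norm_eq_abs] using this
    _ ≤ _ := Summable.tsum_le_tsum hGabs hsumG.abs hsumrest
  have hpay := payoff_eq (y := y) r i
  have hfacta : (∑' t, Pt y t * eS y t {a} * r {a} i) = (∑' t, Pt y t * eS y t {a}) * r {a} i :=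
    tsum_mul_right
  have hfactb : (∑' t, Pt y t * eS y t {b} * r {b} i) = (∑' t, Pt y t * eS y t {b}) * r {b} i :=
    tsum_mul_right
  have : payoff r y i - ((∑' t, Pt y t * eS y t {a}) * r {a} i
      + (∑' t, Pt y t * eS y t {b}) * r {b} i
      + (1 - ∑' t, Pt y t * (1 - Dt y t)) * r ∅ i) = ∑' t, G t := by
    rw [hpay, htsumF, hfacta, hfactb]; ring
  rw [this]
  exact habstsum

/-- one tracked singleton -/
lemma payoff_near₁ (a : Fin N) (i : Fin N) :
    |payoff r y i
        - ((∑' t, Pt y t * eS y t {a}) * r {a} i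
            + (1 - ∑' t, Pt y t * (1 - Dt y t)) * r ∅ i)|
      ≤ ∑' t, Pt y t * (1 - Dt y t - eS y t {a}) := by
  have hamem : ({a} : Finset (Fin N)) ∈ nonempties N := mem_nonempties.2 (Finset.singleton_ne_empty a)
  set s2 := ((nonempties N).erase {a}) with hs2
  have hdecomp : ∀ g : Finset (Fin N) → ℝ, ∑ S ∈ nonempties N, g S
      = ∑ S ∈ s2, g S + g {a} := by
    intro g
    rw [← Finset.sum_erase_add _ _ hamem]
  have hrest_nonneg : ∀ t, 0 ≤ 1 - Dt y t - eS y t {a} := by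
    intro t
    have h := hdecomp (eS y t)
    rw [sum_eS] at h
    have h2 : 0 ≤ ∑ S ∈ s2, eS y t S := Finset.sum_nonneg fun S _ => eS_nonneg hy t S
    linarith
  have hstage : ∀ t, |(∑ S ∈ nonempties N, eS y t S * r S i) - eS y t {a} * r {a} i|
      ≤ 1 - Dt y t - eS y t {a} := by
    intro t
    have h := hdecomp (fun S => eS y t S * r S i)
    have h2 : (∑ S ∈ nonempties N, eS y t S * r S i) - eS y t {a} * r {a} i
        = ∑ S ∈ s2, eS y t S * r S i := by rw [h]; ring
    rw [h2]
    have hE := hdecomp (eS y t)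
    rw [sum_eS] at hE
    calc |∑ S ∈ s2, eS y t S * r S i| ≤ ∑ S ∈ s2, |eS y t S * r S i| :=
        Finset.abs_sum_le_sum_abs _ _
    _ ≤ ∑ S ∈ s2, eS y t S := by
        refine Finset.sum_le_sum fun S _ => ?_
        rw [abs_mul, abs_of_nonneg (eS_nonneg hy t S)]
        have h1 : |r S i| ≤ 1 := abs_le.2 ⟨(hr S i).1, (hr S i).2⟩
        nlinarith [eS_nonneg hy t S, abs_nonneg (r S i)]
    _ = 1 - Dt y t - eS y t {a} := by linarith
  have hPmem := Pt_mem hy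
  have hsuma : Summable (fun t => Pt y t * eS y t {a} * r {a} i) := by
    refine summable_Pf hy fun t => ?_
    rw [abs_mul, abs_mul, abs_of_nonneg (hPmem t).1, abs_of_nonneg (eS_nonneg hy t _)]
    have h1 : |r {a} i| ≤ 1 := abs_le.2 ⟨(hr _ i).1, (hr _ i).2⟩
    have h2 := eS_le hy t hamem
    have h3 := eS_nonneg hy t ({a} : Finset (Fin N))
    calc Pt y t * eS y t {a} * |r {a} i| ≤ Pt y t * eS y t {a} :=
        mul_le_of_le_one_right (mul_nonneg (hPmem t).1 h3) h1
    _ ≤ Pt y t * (1 - Dt y t) := mul_le_mul_of_nonneg_left h2 (hPmem t).1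
  have hsumrest : Summable (fun t => Pt y t * (1 - Dt y t - eS y t {a})) := by
    refine summable_Pf hy fun t => ?_
    rw [abs_mul, abs_of_nonneg (hPmem t).1, abs_of_nonneg (hrest_nonneg t)]
    have := eS_nonneg hy t ({a} : Finset (Fin N))
    nlinarith [(hPmem t).1, (hPmem t).2]
  set G := fun t => Pt y t * (∑ S ∈ nonempties N, eS y t S * r S i)
    - Pt y t * eS y t {a} * r {a} i with hG
  have hGabs : ∀ t, |G t| ≤ Pt y t * (1 - Dt y t - eS y t {a}) := by
    intro t
    have h1 : G t = Pt y t * ((∑ S ∈ nonempties N, eS y t S * r S i)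
        - eS y t {a} * r {a} i) := by rw [hG]; ring
    rw [h1, abs_mul, abs_of_nonneg (hPmem t).1]
    exact mul_le_mul_of_nonneg_left (hstage t) (hPmem t).1
  have hsumG : Summable G := by
    refine summable_Pf hy fun t => ?_
    refine le_trans (hGabs t) ?_
    refine mul_le_mul_of_nonneg_left ?_ (hPmem t).1
    have := eS_nonneg hy t ({a} : Finset (Fin N))
    linarith
  have htsumF : (∑' t, Pt y t * (∑ S ∈ nonempties N, eS y t S * r S i))
      = (∑' t, Pt y t * eS y t {a} * r {a} i) + ∑' t, G t := by
    rw [← Summable.tsum_add hsuma hsumG]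
    exact tsum_congr fun t => by rw [hG]; ring
  have habstsum : |∑' t, G t| ≤ ∑' t, Pt y t * (1 - Dt y t - eS y t {a}) := by
    calc |∑' t, G t| ≤ ∑' t, |G t| := by
          have := norm_tsum_le_tsum_norm (f := G) (by
            simpa [Real.norm_eq_abs] using hsumG.abs)
          simpa [Real.norm_eq_abs] using this
    _ ≤ _ := Summable.tsum_le_tsum hGabs hsumG.abs hsumrest
  have hpay := payoff_eq (y := y) r i
  have hfacta : (∑' t, Pt y t * eS y t {a} * r {a} i) = (∑' t, Pt y t * eS y t {a}) * r {a} i :=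
    tsum_mul_right
  have : payoff r y i - ((∑' t, Pt y t * eS y t {a}) * r {a} i
      + (1 - ∑' t, Pt y t * (1 - Dt y t)) * r ∅ i) = ∑' t, G t := by
    rw [hpay, htsumF, hfacta]; ring
  rw [this]
  exact habstsum

end payoffs

/-! ### more helpers -/

lemma prod_univ_eq (f : Fin N → ℝ) (s : Finset (Fin N)) (hf : ∀ i ∉ s, f i = 1) :
    ∏ i, f i = ∏ i ∈ s, f i :=
  (Finset.prod_subset (Finset.subset_univ s) fun i _ hi => hf i hi).symm

lemma prod_compl_eq (f : Fin N → ℝ) (a : Fin N) (s : Finset (Fin N)) (hs : s ⊆ {a}ᶜ)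
    (hf : ∀ i, i ∉ s → i ≠ a → f i = 1) : ∏ i ∈ ({a} : Finset (Fin N))ᶜ, f i = ∏ i ∈ s, f i :=
  (Finset.prod_subset hs fun i hi his => hf i his (by simpa using hi)).symm

lemma eS_singleton (y : Fin N → ℕ → ℝ) (t : ℕ) (a : Fin N) :
    eS y t {a} = y a t * ∏ i ∈ ({a} : Finset (Fin N))ᶜ, (1 - y i t) := by
  rw [eS, Finset.prod_singleton]

section profile2
variable {y : Fin N → ℕ → ℝ} (hy : ∀ i t, y i t ∈ Set.Icc (0:ℝ) 1)
include hy

lemma summable_Pt_pow (β : ℝ) (hβ0 : 0 ≤ β) (hβ1 : β < 1) (h : ∀ u, Dt y u ≤ β) :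
    Summable (Pt y) :=
  Summable.of_nonneg_of_le (fun t => (Pt_mem hy t).1) (Pt_le_pow hy β h)
    (summable_geometric_of_lt_one hβ0 hβ1)

lemma tsum_Pt_le (β : ℝ) (hβ0 : 0 ≤ β) (hβ1 : β < 1) (h : ∀ u, Dt y u ≤ β) :
    (∑' t, Pt y t) ≤ (1 - β)⁻¹ := by
  have h1 := Summable.tsum_le_tsum (Pt_le_pow hy β h) (summable_Pt_pow hy β hβ0 hβ1 h)
    (summable_geometric_of_lt_one hβ0 hβ1)
  rwa [tsum_geometric_of_lt_one hβ0 hβ1] at h1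

lemma Pt_mul_le (s' : ℕ → ℝ) (hs : ∀ t, s' t ∈ Set.Icc (0:ℝ) 1)
    (h : ∀ u, Dt y u ≤ 1 - s' u) (t : ℕ) :
    Pt y t * s' t ≤ (∏ u ∈ Finset.range t, (1 - s' u)) * (1 - (1 - s' t)) := by
  have h1 := Pt_le_prod hy (fun u => 1 - s' u) h t
  have h2 : (1 : ℝ) - (1 - s' t) = s' t := by ring
  rw [h2]
  exact mul_le_mul_of_nonneg_right h1 (hs t).1

lemma summable_Pt_mul (s' : ℕ → ℝ) (hs : ∀ t, s' t ∈ Set.Icc (0:ℝ) 1)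
    (h : ∀ u, Dt y u ≤ 1 - s' u) : Summable (fun t => Pt y t * s' t) := by
  have hone : ∀ t, (1 - s' t) ∈ Set.Icc (0:ℝ) 1 := by
    intro t; constructor <;> [linarith [(hs t).2]; linarith [(hs t).1]]
  exact Summable.of_nonneg_of_le
    (fun t => mul_nonneg (Pt_mem hy t).1 (hs t).1)
    (Pt_mul_le hy s' hs h) (summable_surv hone)

lemma tsum_Pt_mul_le (s' : ℕ → ℝ) (hs : ∀ t, s' t ∈ Set.Icc (0:ℝ) 1)
    (h : ∀ u, Dt y u ≤ 1 - s' u) : (∑' t, Pt y t * s' t) ≤ 1 := by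
  have hone : ∀ t, (1 - s' t) ∈ Set.Icc (0:ℝ) 1 := by
    intro t; constructor <;> [linarith [(hs t).2]; linarith [(hs t).1]]
  calc (∑' t, Pt y t * s' t)
      ≤ ∑' t, (∏ u ∈ Finset.range t, (1 - s' u)) * (1 - (1 - s' t)) :=
        Summable.tsum_le_tsum (Pt_mul_le hy s' hs h) (summable_Pt_mul hy s' hs h) (summable_surv hone)
  _ ≤ 1 := tsum_surv_le hone

end profile2

/-! ### the three equilibrium constructions -/

section equilibria
variable (r : Finset (Fin N) → Fin N → ℝ)
  (hr : ∀ S i, r S i ∈ Set.Icc (-1:ℝ) 1) (hdiag : ∀ i : Fin N, r {i} i = 0)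

include hr hdiag

lemma zero_equilibrium (hA : ∀ i, 0 ≤ r ∅ i) (ε : ℝ) (hε : 0 ≤ ε) :
    IsEpsEquilibrium r (fun _ _ => 0) ε := by
  constructor
  · intro i t; exact ⟨le_refl 0, zero_le_one⟩
  intro i x' hx'
  set x : Fin N → ℕ → ℝ := fun _ _ => 0 with hxdef
  have hterm : ∀ (t : ℕ) (S : Finset (Fin N)), S ∈ nonempties N → termProb x t S = 0 := by
    intro t S hS
    obtain ⟨j, hj⟩ := Finset.nonempty_iff_ne_empty.2 (mem_nonempties.1 hS)
    rw [termProb_eq, eS]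
    have h0 : (∏ i' ∈ S, x i' t) = 0 := Finset.prod_eq_zero hj rfl
    rw [h0]; ring
  have hpayx : payoff r x i = r ∅ i := by
    rw [payoff]
    have h0 : ∀ t : ℕ, ∑ S ∈ nonempties N, termProb x t S * r S i = 0 := fun t =>
      Finset.sum_eq_zero fun S hS => by rw [hterm t S hS, zero_mul]
    have h0' : ∀ t : ℕ, ∑ S ∈ nonempties N, termProb x t S = 0 := fun t =>
      Finset.sum_eq_zero fun S hS => hterm t S hS
    simp [h0, h0', tsum_zero]
  set y := Function.update x i x' with hydef
  have hyval : ∀ i' t, y i' t = if i' = i then x' t else 0 := by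
    intro i' t; rw [hydef, Function.update_apply]
    by_cases h : i' = i <;> simp [h, hxdef]
  have hy : ∀ i' t, y i' t ∈ Set.Icc (0:ℝ) 1 := by
    intro i' t; rw [hyval]
    by_cases h : i' = i <;> simp [h]
    exact hx' t
  have hDt : ∀ t, Dt y t = 1 - x' t := by
    intro t
    rw [Dt, prod_univ_eq _ {i} (by intro i' hi'; simp at hi'; rw [hyval]; simp [hi']),
      Finset.prod_singleton, hyval]
    simp
  have heSi : ∀ t, eS y t {i} = x' t := by
    intro t
    rw [eS_singleton, prod_compl_eq _ i ∅ (Finset.empty_subset _)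
      (by intro i' _ hi'; rw [hyval]; simp [hi']), Finset.prod_empty, mul_one, hyval]
    simp
  have hrest0 : (∑' t, Pt y t * (1 - Dt y t - eS y t {i})) = 0 := by
    have : ∀ t : ℕ, Pt y t * (1 - Dt y t - eS y t {i}) = 0 := by
      intro t; rw [hDt, heSi]; ring
    rw [tsum_congr this, tsum_zero]
  have hnear := payoff_near₁ r hy hr i i
  rw [hrest0, hdiag i, mul_zero, zero_add] at hnear
  have heq : payoff r y i = (1 - ∑' t, Pt y t * (1 - Dt y t)) * r ∅ i := by
    have := abs_nonpos_iff.1 hnear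
    linarith [sub_eq_zero.1 this]
  have hT0 := tsum_PD_nonneg hy
  have hT1 := tsum_PD_le hy
  have hle : payoff r y i ≤ r ∅ i := by
    rw [heq]
    nlinarith [hA i]
  rw [hpayx]
  linarith

lemma solo_equilibrium (m : Fin N) (p ε : ℝ) (hε : 0 < ε)
    (hp0 : 0 < p) (hp1 : p ≤ 1/2) (hpε : p ≤ ε)
    (hP1 : ∀ j, 0 ≤ r {m} j) (hm0 : r ∅ m ≤ 0) :
    IsEpsEquilibrium r (fun i _ => if i = m then p else 0) ε := by
  set x : Fin N → ℕ → ℝ := fun i _ => if i = m then p else 0 with hxdef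
  have hxm : ∀ t, x m t = p := fun t => by rw [hxdef]; simp
  have hxo : ∀ i', i' ≠ m → ∀ t, x i' t = 0 := fun i' h t => by rw [hxdef]; simp [h]
  have hx : ∀ i t, x i t ∈ Set.Icc (0:ℝ) 1 := by
    intro i t
    by_cases h : i = m
    · subst h; rw [hxm t]; constructor <;> linarith
    · rw [hxo i h t]; simp
  refine ⟨hx, ?_⟩
  intro i x' hx'
  -- equilibrium payoff
  have hDx : ∀ t, Dt x t = 1 - p := by
    intro t
    rw [Dt, prod_univ_eq _ {m} (by intro i' hi'; simp at hi'; rw [hxo i' hi' t]; ring),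
      Finset.prod_singleton, hxm t]
  have hPx : ∀ t, Pt x t = (1 - p) ^ t := by
    intro t
    rw [Pt, Finset.prod_congr rfl (fun u _ => hDx u), Finset.prod_const, Finset.card_range]
  have heSm : ∀ t, eS x t {m} = p := by
    intro t
    rw [eS_singleton, prod_compl_eq _ m ∅ (Finset.empty_subset _)
      (by intro i' _ hi'; rw [hxo i' hi' t]; ring), Finset.prod_empty, mul_one, hxm t]
  have hgeom : (∑' t : ℕ, (1 - p) ^ t) = (1 - (1 - p))⁻¹ :=
    tsum_geometric_of_lt_one (by linarith) (by linarith)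
  have hA : (∑' t, Pt x t * eS x t {m}) = 1 := by
    rw [tsum_congr (fun t => by rw [hPx, heSm] : ∀ t, Pt x t * eS x t {m} = (1-p)^t * p),
      tsum_mul_right, hgeom, show (1:ℝ) - (1-p) = p by ring]
    exact inv_mul_cancel₀ (ne_of_gt hp0)
  have hT : (∑' t, Pt x t * (1 - Dt x t)) = 1 := by
    rw [tsum_congr (fun t => by rw [hPx, hDx]; ring :
        ∀ t, Pt x t * (1 - Dt x t) = (1-p)^t * p),
      tsum_mul_right, hgeom, show (1:ℝ) - (1-p) = p by ring]
    exact inv_mul_cancel₀ (ne_of_gt hp0)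
  have hrestx : (∑' t, Pt x t * (1 - Dt x t - eS x t {m})) = 0 := by
    rw [tsum_congr (fun t => by rw [hDx, heSm]; ring :
      ∀ t, Pt x t * (1 - Dt x t - eS x t {m}) = 0), tsum_zero]
  have hpayx : ∀ j, payoff r x j = r {m} j := by
    intro j
    have hnear := payoff_near₁ r hx hr m j
    rw [hrestx, hA, hT, one_mul, sub_self, zero_mul, add_zero] at hnear
    exact sub_eq_zero.1 (abs_nonpos_iff.1 hnear)
  -- deviation
  set y := Function.update x i x' with hydef
  have hyi : ∀ t, y i t = x' t := fun t => by rw [hydef]; simp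
  have hyo : ∀ i', i' ≠ i → ∀ t, y i' t = x i' t := fun i' h t => by
    rw [hydef, Function.update_apply, if_neg h]
  have hy : ∀ i' t, y i' t ∈ Set.Icc (0:ℝ) 1 := by
    intro i' t
    by_cases h : i' = i
    · subst h; rw [hyi t]; exact hx' t
    · rw [hyo i' h t]; exact hx i' t
  by_cases him : i = m
  · -- the quitter deviates
    subst him
    have hDy : ∀ t, Dt y t = 1 - x' t := by
      intro t
      rw [Dt, prod_univ_eq _ {i} (by
          intro i' hi'; simp at hi'; rw [hyo i' hi' t, hxo i' hi' t]; ring),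
        Finset.prod_singleton, hyi t]
    have heSi : ∀ t, eS y t {i} = x' t := by
      intro t
      rw [eS_singleton, prod_compl_eq _ i ∅ (Finset.empty_subset _)
        (by intro i' _ hi'; rw [hyo i' hi' t, hxo i' hi' t]; ring),
        Finset.prod_empty, mul_one, hyi t]
    have hrest0 : (∑' t, Pt y t * (1 - Dt y t - eS y t {i})) = 0 := by
      rw [tsum_congr (fun t => by rw [hDy, heSi]; ring :
        ∀ t, Pt y t * (1 - Dt y t - eS y t {i}) = 0), tsum_zero]
    have hnear := payoff_near₁ r hy hr i i
    rw [hrest0, hdiag i, mul_zero, zero_add] at hnear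
    have heq : payoff r y i = (1 - ∑' t, Pt y t * (1 - Dt y t)) * r ∅ i :=
      sub_eq_zero.1 (abs_nonpos_iff.1 hnear)
    have hT0 := tsum_PD_nonneg hy
    have hT1 := tsum_PD_le hy
    have hle : payoff r y i ≤ 0 := by rw [heq]; nlinarith
    rw [hpayx i, hdiag i]
    linarith
  · -- a bystander deviates
    have hmi : m ≠ i := fun h => him h.symm
    have hym : ∀ t, y m t = p := fun t => by rw [hyo m hmi t, hxm t]
    have hyoo : ∀ i', i' ≠ i → i' ≠ m → ∀ t, y i' t = 0 := fun i' h1 h2 t => by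
      rw [hyo i' h1 t, hxo i' h2 t]
    have hDy : ∀ t, Dt y t = (1 - p) * (1 - x' t) := by
      intro t
      rw [Dt, prod_univ_eq _ {m, i} (by
          intro i' hi'; simp at hi'; rw [hyoo i' hi'.2 hi'.1 t]; ring),
        Finset.prod_pair hmi, hym t, hyi t]
    have heSm : ∀ t, eS y t {m} = p * (1 - x' t) := by
      intro t
      rw [eS_singleton, prod_compl_eq _ m {i} (by simp [hmi])
        (by intro i' hi' hi''; simp at hi'; rw [hyoo i' hi' hi'' t]; ring),
        Finset.prod_singleton, hym t, hyi t]
    have heSi : ∀ t, eS y t {i} = x' t * (1 - p) := by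
      intro t
      rw [eS_singleton, prod_compl_eq _ i {m} (by simp [him])
        (by intro i' hi' hi''; simp at hi'; rw [hyoo i' hi'' hi' t]; ring),
        Finset.prod_singleton, hym t, hyi t]
    have hrest : ∀ t, 1 - Dt y t - eS y t {m} - eS y t {i} = p * x' t := by
      intro t; rw [hDy, heSm, heSi]; ring
    have hDyle : ∀ u, Dt y u ≤ 1 - x' u := by
      intro u; rw [hDy]
      nlinarith [(hx' u).1, (hx' u).2]
    have hT : (∑' t, Pt y t * (1 - Dt y t)) = 1 := by
      refine tsum_surv_eq (Dt_mem hy) (1 - p) (by linarith) ?_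
      intro u; rw [hDy]
      nlinarith [(hx' u).1, (hx' u).2]
    have hA0 : 0 ≤ (∑' t, Pt y t * eS y t {m}) :=
      tsum_nonneg fun t => mul_nonneg (Pt_mem hy t).1 (eS_nonneg hy t _)
    have hA1 : (∑' t, Pt y t * eS y t {m}) ≤ 1 := by
      have h1 : ∀ t, Pt y t * eS y t {m} ≤ Pt y t * (1 - Dt y t) := fun t =>
        mul_le_mul_of_nonneg_left
          (eS_le hy t (mem_nonempties.2 (Finset.singleton_ne_empty m))) (Pt_mem hy t).1
      have h2 := Summable.tsum_le_tsum h1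
        (summable_Pf hy fun t => by
          rw [abs_of_nonneg (mul_nonneg (Pt_mem hy t).1 (eS_nonneg hy t _))]; exact h1 t)
        (summable_PD hy)
      rw [hT] at h2; exact h2
    have hR : (∑' t, Pt y t * (1 - Dt y t - eS y t {m} - eS y t {i})) ≤ p := by
      have h1 : ∀ t, Pt y t * (1 - Dt y t - eS y t {m} - eS y t {i}) = p * (Pt y t * x' t) :=
        fun t => by rw [hrest]; ring
      rw [tsum_congr h1, tsum_mul_left]
      have h2 := tsum_Pt_mul_le hy x' hx' hDyle
      nlinarith [h2]
    have hnear := payoff_near₂ r hy hr m i hmi i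
    rw [hdiag i, mul_zero, add_zero, hT, sub_self, zero_mul, add_zero] at hnear
    have hle : payoff r y i ≤ r {m} i + p := by
      have h1 := abs_le.1 hnear
      have h2 : (∑' t, Pt y t * eS y t {m}) * r {m} i ≤ r {m} i := by
        nlinarith [hP1 i, (hr {m} i).2]
      linarith [h1.2]
    rw [hpayx i]
    linarith

set_option maxHeartbeats 1600000 in
lemma pair_equilibrium (m k : Fin N) (hkm : k ≠ m) (p q ε : ℝ) (hε : 0 < ε)
    (hp0 : 0 < p) (hp1 : p ≤ 1/8) (hpε : 8 * p ≤ ε)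
    (hq0 : 0 < q) (hqp : q ≤ p) (hqε : 64 * q ≤ ε * p)
    (hP1 : ∀ j, 0 ≤ r {m} j) (hk0 : r {k} m ≤ 0) :
    IsEpsEquilibrium r (fun i _ => if i = m then p else if i = k then q else 0) ε := by
  have hmk : m ≠ k := Ne.symm hkm
  set x : Fin N → ℕ → ℝ := fun i _ => if i = m then p else if i = k then q else 0 with hxdef
  have hxm : ∀ t, x m t = p := fun t => by rw [hxdef]; simp
  have hxk : ∀ t, x k t = q := fun t => by rw [hxdef]; simp [hkm]
  have hxo : ∀ i', i' ≠ m → i' ≠ k → ∀ t, x i' t = 0 := fun i' h1 h2 t => by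
    rw [hxdef]; simp [h1, h2]
  have hx : ∀ i t, x i t ∈ Set.Icc (0:ℝ) 1 := by
    intro i t
    by_cases h1 : i = m
    · subst h1; rw [hxm t]; constructor <;> linarith
    by_cases h2 : i = k
    · subst h2; rw [hxk t]; constructor <;> linarith
    · rw [hxo i h1 h2 t]; simp
  refine ⟨hx, ?_⟩
  intro i x' hx'
  set β : ℝ := (1 - p) * (1 - q) with hβdef
  have hβ0 : 0 ≤ β := by rw [hβdef]; nlinarith
  have hβ1 : β < 1 := by rw [hβdef]; nlinarith
  have h1βp : p ≤ 1 - β := by rw [hβdef]; nlinarith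
  have h1β0 : (0:ℝ) < 1 - β := by linarith
  have hι0 : (0:ℝ) ≤ (1 - β)⁻¹ := le_of_lt (inv_pos.2 h1β0)
  have hιp : (1 - β)⁻¹ ≤ p⁻¹ := by
    exact inv_anti₀ hp0 h1βp
  have hqop : q * p⁻¹ ≤ ε / 64 := by
    rw [← div_eq_mul_inv, div_le_div_iff₀ hp0 (by norm_num)]
    linarith
  have hppos : (0:ℝ) < p⁻¹ := inv_pos.2 hp0
  -- the equilibrium payoff
  have hDx : ∀ t, Dt x t = β := by
    intro t
    rw [Dt, prod_univ_eq _ {m, k} (by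
        intro i' hi'; simp at hi'; rw [hxo i' hi'.1 hi'.2 t]; ring),
      Finset.prod_pair hmk, hxm t, hxk t, hβdef]
  have hPx : ∀ t, Pt x t = β ^ t := by
    intro t
    rw [Pt, Finset.prod_congr rfl (fun u _ => hDx u), Finset.prod_const, Finset.card_range]
  have heSxm : ∀ t, eS x t {m} = p * (1 - q) := by
    intro t
    rw [eS_singleton, prod_compl_eq _ m {k} (by simp [hkm, hmk])
      (by intro i' hi' hi''; simp at hi'; rw [hxo i' hi'' hi' t]; ring),
      Finset.prod_singleton, hxm t, hxk t]
  have heSxk : ∀ t, eS x t {k} = q * (1 - p) := by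
    intro t
    rw [eS_singleton, prod_compl_eq _ k {m} (by simp [hkm, hmk])
      (by intro i' hi' hi''; simp at hi'; rw [hxo i' hi' hi'' t]; ring),
      Finset.prod_singleton, hxm t, hxk t]
  have hgeo : (∑' t : ℕ, β ^ t) = (1 - β)⁻¹ := tsum_geometric_of_lt_one hβ0 hβ1
  have hA : (∑' t, Pt x t * eS x t {m}) = (1 - β)⁻¹ * (p * (1 - q)) := by
    rw [tsum_congr (fun t => by rw [hPx, heSxm] :
      ∀ t, Pt x t * eS x t {m} = β ^ t * (p * (1 - q))), tsum_mul_right, hgeo]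
  have hB : (∑' t, Pt x t * eS x t {k}) = (1 - β)⁻¹ * (q * (1 - p)) := by
    rw [tsum_congr (fun t => by rw [hPx, heSxk] :
      ∀ t, Pt x t * eS x t {k} = β ^ t * (q * (1 - p))), tsum_mul_right, hgeo]
  have hT : (∑' t, Pt x t * (1 - Dt x t)) = 1 := by
    rw [tsum_congr (fun t => by rw [hPx, hDx] :
      ∀ t, Pt x t * (1 - Dt x t) = β ^ t * (1 - β)), tsum_mul_right, hgeo]
    exact inv_mul_cancel₀ (ne_of_gt h1β0)
  have hR : (∑' t, Pt x t * (1 - Dt x t - eS x t {m} - eS x t {k}))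
      = (1 - β)⁻¹ * (p * q) := by
    rw [tsum_congr (fun t => by
        rw [hPx, hDx, heSxm, heSxk]
        rw [hβdef]; ring :
      ∀ t, Pt x t * (1 - Dt x t - eS x t {m} - eS x t {k}) = β ^ t * (p * q)),
      tsum_mul_right, hgeo]
  have hpayx : ∀ j, r {m} j - ε/8 ≤ payoff r x j := by
    intro j
    have hnear := payoff_near₂ r hx hr m k hmk j
    rw [hA, hB, hT, hR, sub_self, zero_mul, add_zero] at hnear
    have h1 := (abs_le.1 hnear).1
    have hrm0 := hP1 j
    have hrm1 := (hr {m} j).2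
    have hrk := (hr {k} j).1
    set A : ℝ := (1 - β)⁻¹ * (p * (1 - q)) with hAdef
    set B : ℝ := (1 - β)⁻¹ * (q * (1 - p)) with hBdef
    set R : ℝ := (1 - β)⁻¹ * (p * q) with hRdef
    have h3 : (1 - β)⁻¹ * (1 - β) = 1 := inv_mul_cancel₀ (ne_of_gt h1β0)
    have hA1 : A ≤ 1 := by
      rw [hAdef]
      have h2 : p * (1 - q) ≤ 1 - β := by rw [hβdef]; nlinarith
      calc (1 - β)⁻¹ * (p * (1 - q)) ≤ (1 - β)⁻¹ * (1 - β) :=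
        mul_le_mul_of_nonneg_left h2 hι0
      _ = 1 := h3
    have honeA : 1 - A = (1 - β)⁻¹ * q := by
      rw [hAdef]
      have h4 : (1 - β) - p * (1 - q) = q := by rw [hβdef]; ring
      linear_combination (-1 : ℝ) * h3 + (1 - β)⁻¹ * h4
    have hB0 : 0 ≤ B := by
      rw [hBdef]; apply mul_nonneg hι0; nlinarith
    have hιq : (1 - β)⁻¹ * q ≤ q * p⁻¹ := by
      calc (1 - β)⁻¹ * q ≤ p⁻¹ * q := mul_le_mul_of_nonneg_right hιp (le_of_lt hq0)
      _ = q * p⁻¹ := mul_comm _ _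
    have hBle : B ≤ q * p⁻¹ := by
      rw [hBdef]
      calc (1 - β)⁻¹ * (q * (1 - p)) ≤ (1 - β)⁻¹ * q := by
            apply mul_le_mul_of_nonneg_left _ hι0
            nlinarith
      _ ≤ q * p⁻¹ := hιq
    have hpinv1 : (1:ℝ) ≤ p⁻¹ := by
      have h5 := inv_anti₀ hp0 (by linarith : p ≤ 1)
      simpa using h5
    have hqqp : q ≤ q * p⁻¹ := by nlinarith
    have hRle : R ≤ q * p⁻¹ := by
      rw [hRdef]
      have h6 : (1 - β)⁻¹ * (p * q) ≤ p⁻¹ * (p * q) := by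
        apply mul_le_mul_of_nonneg_right hιp
        nlinarith
      have h7 : p⁻¹ * (p * q) = q := by field_simp
      linarith
    have hAr : r {m} j - (1 - A) ≤ A * r {m} j := by
      have h8 : (1 - A) * r {m} j ≤ 1 - A :=
        mul_le_of_le_one_right (by linarith : (0:ℝ) ≤ 1 - A) hrm1
      nlinarith
    have hBr : -B ≤ B * r {k} j := by
      have h9 := mul_le_mul_of_nonneg_left hrk hB0
      rw [mul_neg_one] at h9
      linarith
    have h10 : (1 - β)⁻¹ * q ≤ ε/64 := le_trans hιq hqop
    linarith [honeA, hAr, hBr, hBle, hRle, h1, hqop]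
  -- deviations
  set y := Function.update x i x' with hydef
  have hyi : ∀ t, y i t = x' t := fun t => by rw [hydef]; simp
  have hyo : ∀ i', i' ≠ i → ∀ t, y i' t = x i' t := fun i' h t => by
    rw [hydef, Function.update_apply, if_neg h]
  have hy : ∀ i' t, y i' t ∈ Set.Icc (0:ℝ) 1 := by
    intro i' t
    by_cases h : i' = i
    · subst h; rw [hyi t]; exact hx' t
    · rw [hyo i' h t]; exact hx i' t
  have hSingm : ({m} : Finset (Fin N)) ∈ nonempties N :=
    mem_nonempties.2 (Finset.singleton_ne_empty m)
  by_cases him : i = m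
  · -- the main quitter deviates
    subst him
    have hki : k ≠ i := hkm
    have hyk : ∀ t, y k t = q := fun t => by rw [hyo k hki t, hxk t]
    have hyoo : ∀ i', i' ≠ i → i' ≠ k → ∀ t, y i' t = 0 := fun i' h1 h2 t => by
      rw [hyo i' h1 t, hxo i' h1 h2 t]
    have hDy : ∀ t, Dt y t = (1 - q) * (1 - x' t) := by
      intro t
      rw [Dt, prod_univ_eq _ {k, i} (by
          intro i' hi'; simp at hi'; rw [hyoo i' hi'.2 hi'.1 t]; ring),
        Finset.prod_pair hki, hyk t, hyi t]
    have heSk : ∀ t, eS y t {k} = q * (1 - x' t) := by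
      intro t
      rw [eS_singleton, prod_compl_eq _ k {i} (by simp [hki, Ne.symm hki])
        (by intro i' hi' hi''; simp at hi'; rw [hyoo i' hi' hi'' t]; ring),
        Finset.prod_singleton, hyk t, hyi t]
    have heSi : ∀ t, eS y t {i} = x' t * (1 - q) := by
      intro t
      rw [eS_singleton, prod_compl_eq _ i {k} (by simp [hki, Ne.symm hki])
        (by intro i' hi' hi''; simp at hi'; rw [hyoo i' hi'' hi' t]; ring),
        Finset.prod_singleton, hyk t, hyi t]
    have hrest : ∀ t, 1 - Dt y t - eS y t {k} - eS y t {i} = q * x' t := by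
      intro t; rw [hDy t, heSk t, heSi t]; ring
    have hDyle : ∀ u, Dt y u ≤ 1 - x' u := by
      intro u; rw [hDy u]
      nlinarith [(hx' u).1, (hx' u).2]
    have hTy : (∑' t, Pt y t * (1 - Dt y t)) = 1 := by
      refine tsum_surv_eq (Dt_mem hy) (1 - q) (by linarith) ?_
      intro u; rw [hDy u]
      nlinarith [(hx' u).1, (hx' u).2]
    have hA0 : 0 ≤ (∑' t, Pt y t * eS y t {k}) :=
      tsum_nonneg fun t => mul_nonneg (Pt_mem hy t).1 (eS_nonneg hy t _)
    have hRy : (∑' t, Pt y t * (1 - Dt y t - eS y t {k} - eS y t {i})) ≤ q := by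
      rw [tsum_congr (fun t => by rw [hrest t]; ring :
        ∀ t, Pt y t * (1 - Dt y t - eS y t {k} - eS y t {i}) = q * (Pt y t * x' t)),
        tsum_mul_left]
      have h2 := tsum_Pt_mul_le hy x' hx' hDyle
      nlinarith
    have hnear := payoff_near₂ r hy hr k i hki i
    rw [hdiag i, mul_zero, add_zero, hTy, sub_self, zero_mul, add_zero] at hnear
    have hle : payoff r y i ≤ q := by
      have h1 := (abs_le.1 hnear).2
      have h2 : (∑' t, Pt y t * eS y t {k}) * r {k} i ≤ 0 :=
        mul_nonpos_of_nonneg_of_nonpos hA0 hk0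
      linarith
    have h3 := hpayx i
    rw [hdiag i] at h3
    have hq8 : q ≤ ε/8 := by linarith
    linarith
  by_cases hik : i = k
  · -- the punisher deviates
    subst hik
    have hym : ∀ t, y m t = p := fun t => by rw [hyo m hmk t, hxm t]
    have hyoo : ∀ i', i' ≠ i → i' ≠ m → ∀ t, y i' t = 0 := fun i' h1 h2 t => by
      rw [hyo i' h1 t, hxo i' h2 h1 t]
    have hDy : ∀ t, Dt y t = (1 - p) * (1 - x' t) := by
      intro t
      rw [Dt, prod_univ_eq _ {m, i} (by
          intro i' hi'; simp at hi'; rw [hyoo i' hi'.2 hi'.1 t]; ring),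
        Finset.prod_pair hmk, hym t, hyi t]
    have heSm : ∀ t, eS y t {m} = p * (1 - x' t) := by
      intro t
      rw [eS_singleton, prod_compl_eq _ m {i} (by simp [hkm, hmk])
        (by intro i' hi' hi''; simp at hi'; rw [hyoo i' hi' hi'' t]; ring),
        Finset.prod_singleton, hym t, hyi t]
    have heSi : ∀ t, eS y t {i} = x' t * (1 - p) := by
      intro t
      rw [eS_singleton, prod_compl_eq _ i {m} (by simp [hkm, hmk])
        (by intro i' hi' hi''; simp at hi'; rw [hyoo i' hi'' hi' t]; ring),
        Finset.prod_singleton, hym t, hyi t]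
    have hrest : ∀ t, 1 - Dt y t - eS y t {m} - eS y t {i} = p * x' t := by
      intro t; rw [hDy t, heSm t, heSi t]; ring
    have hDyle : ∀ u, Dt y u ≤ 1 - x' u := by
      intro u; rw [hDy u]
      nlinarith [(hx' u).1, (hx' u).2]
    have hTy : (∑' t, Pt y t * (1 - Dt y t)) = 1 := by
      refine tsum_surv_eq (Dt_mem hy) (1 - p) (by linarith) ?_
      intro u; rw [hDy u]
      nlinarith [(hx' u).1, (hx' u).2]
    have hA0 : 0 ≤ (∑' t, Pt y t * eS y t {m}) :=
      tsum_nonneg fun t => mul_nonneg (Pt_mem hy t).1 (eS_nonneg hy t _)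
    have hA1 : (∑' t, Pt y t * eS y t {m}) ≤ 1 := by
      have h1 : ∀ t, Pt y t * eS y t {m} ≤ Pt y t * (1 - Dt y t) := fun t =>
        mul_le_mul_of_nonneg_left (eS_le hy t hSingm) (Pt_mem hy t).1
      have h2 := Summable.tsum_le_tsum h1
        (summable_Pf hy fun t => by
          rw [abs_of_nonneg (mul_nonneg (Pt_mem hy t).1 (eS_nonneg hy t _))]; exact h1 t)
        (summable_PD hy)
      rw [hTy] at h2; exact h2
    have hRy : (∑' t, Pt y t * (1 - Dt y t - eS y t {m} - eS y t {i})) ≤ p := by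
      rw [tsum_congr (fun t => by rw [hrest t]; ring :
        ∀ t, Pt y t * (1 - Dt y t - eS y t {m} - eS y t {i}) = p * (Pt y t * x' t)),
        tsum_mul_left]
      have h2 := tsum_Pt_mul_le hy x' hx' hDyle
      nlinarith
    have hnear := payoff_near₂ r hy hr m i hmk i
    rw [hdiag i, mul_zero, add_zero, hTy, sub_self, zero_mul, add_zero] at hnear
    have hle : payoff r y i ≤ r {m} i + p := by
      have h1 := (abs_le.1 hnear).2
      have h2 : (∑' t, Pt y t * eS y t {m}) * r {m} i ≤ r {m} i := by
        nlinarith [hP1 i, (hr {m} i).2]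
      linarith
    have h3 := hpayx i
    linarith
  · -- a bystander deviates
    have hmi : m ≠ i := fun h => him h.symm
    have hki : k ≠ i := fun h => hik h.symm
    have hym : ∀ t, y m t = p := fun t => by rw [hyo m hmi t, hxm t]
    have hyk : ∀ t, y k t = q := fun t => by rw [hyo k hki t, hxk t]
    have hyoo : ∀ i', i' ≠ i → i' ≠ m → i' ≠ k → ∀ t, y i' t = 0 := fun i' h1 h2 h3 t => by
      rw [hyo i' h1 t, hxo i' h2 h3 t]
    have hDy : ∀ t, Dt y t = (1 - p) * ((1 - q) * (1 - x' t)) := by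
      intro t
      have hmki : m ∉ ({k, i} : Finset (Fin N)) := by simp [hmk, hmi]
      rw [Dt, prod_univ_eq _ {m, k, i} (by
          intro i' hi'; simp at hi'
          rw [hyoo i' hi'.2.2 hi'.1 hi'.2.1 t]; ring),
        show ({m, k, i} : Finset (Fin N)) = insert m {k, i} from rfl,
        Finset.prod_insert hmki, Finset.prod_pair hki, hym t, hyk t, hyi t]
    have heSm : ∀ t, eS y t {m} = p * ((1 - q) * (1 - x' t)) := by
      intro t
      rw [eS_singleton, prod_compl_eq _ m {k, i} (by simp [hkm, hmk, him, hmi])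
        (by intro i' hi' hi''; simp at hi'
            rw [hyoo i' hi'.2 hi'' hi'.1 t]; ring),
        Finset.prod_pair hki, hym t, hyk t, hyi t]
    have heSi : ∀ t, eS y t {i} = x' t * ((1 - p) * (1 - q)) := by
      intro t
      rw [eS_singleton, prod_compl_eq _ i {m, k} (by simp [hmi, hki, him, hik])
        (by intro i' hi' hi''; simp at hi'
            rw [hyoo i' hi'' hi'.1 hi'.2 t]; ring),
        Finset.prod_pair hmk, hym t, hyk t, hyi t]
    have hrest : ∀ t, 1 - Dt y t - eS y t {m} - eS y t {i}
        = q + p * (1 - q) * x' t := by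
      intro t; rw [hDy t, heSm t, heSi t]; ring
    have hDyle : ∀ u, Dt y u ≤ 1 - x' u := by
      intro u; rw [hDy u]
      nlinarith [(hx' u).1, (hx' u).2]
    have hDyβ : ∀ u, Dt y u ≤ β := by
      intro u; rw [hDy u, hβdef]
      nlinarith [(hx' u).1, (hx' u).2]
    have hTy : (∑' t, Pt y t * (1 - Dt y t)) = 1 := by
      refine tsum_surv_eq (Dt_mem hy) (1 - p) (by linarith) ?_
      intro u; rw [hDy u]
      nlinarith [(hx' u).1, (hx' u).2]
    have hA0 : 0 ≤ (∑' t, Pt y t * eS y t {m}) :=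
      tsum_nonneg fun t => mul_nonneg (Pt_mem hy t).1 (eS_nonneg hy t _)
    have hA1 : (∑' t, Pt y t * eS y t {m}) ≤ 1 := by
      have h1 : ∀ t, Pt y t * eS y t {m} ≤ Pt y t * (1 - Dt y t) := fun t =>
        mul_le_mul_of_nonneg_left (eS_le hy t hSingm) (Pt_mem hy t).1
      have h2 := Summable.tsum_le_tsum h1
        (summable_Pf hy fun t => by
          rw [abs_of_nonneg (mul_nonneg (Pt_mem hy t).1 (eS_nonneg hy t _))]; exact h1 t)
        (summable_PD hy)
      rw [hTy] at h2; exact h2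
    have hsum1 : Summable (fun t => Pt y t) := summable_Pt_pow hy β hβ0 hβ1 hDyβ
    have hsum2 : Summable (fun t => Pt y t * x' t) := summable_Pt_mul hy x' hx' hDyle
    have hRy : (∑' t, Pt y t * (1 - Dt y t - eS y t {m} - eS y t {i}))
        ≤ q * p⁻¹ + p := by
      rw [tsum_congr (fun t => by rw [hrest t]; ring :
        ∀ t, Pt y t * (1 - Dt y t - eS y t {m} - eS y t {i})
          = q * Pt y t + (p * (1 - q)) * (Pt y t * x' t)),
        Summable.tsum_add (hsum1.mul_left q) (hsum2.mul_left (p * (1 - q))),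
        tsum_mul_left, tsum_mul_left]
      have h1 := tsum_Pt_le hy β hβ0 hβ1 hDyβ
      have h2 := tsum_Pt_mul_le hy x' hx' hDyle
      have h3 : 0 ≤ (∑' t, Pt y t) := tsum_nonneg fun t => (Pt_mem hy t).1
      have h4 : 0 ≤ (∑' t, Pt y t * x' t) :=
        tsum_nonneg fun t => mul_nonneg (Pt_mem hy t).1 (hx' t).1
      have h5 : q * (∑' t, Pt y t) ≤ q * (1 - β)⁻¹ :=
        mul_le_mul_of_nonneg_left h1 (le_of_lt hq0)
      have h6 : q * (1 - β)⁻¹ ≤ q * p⁻¹ :=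
        mul_le_mul_of_nonneg_left hιp (le_of_lt hq0)
      nlinarith
    have hnear := payoff_near₂ r hy hr m i hmi i
    rw [hdiag i, mul_zero, add_zero, hTy, sub_self, zero_mul, add_zero] at hnear
    have hle : payoff r y i ≤ r {m} i + (q * p⁻¹ + p) := by
      have h1 := (abs_le.1 hnear).2
      have h2 : (∑' t, Pt y t * eS y t {m}) * r {m} i ≤ r {m} i := by
        nlinarith [hP1 i, (hr {m} i).2]
      linarith
    have h3 := hpayx i
    linarith


end equilibria

/-! ### combinatorial part -/

section comb
variable (r : Finset (Fin N) → Fin N → ℝ)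

lemma normalLevel_succ_subset (l : ℕ) : normalLevel r (l+1) ⊆ normalLevel r l :=
  fun _ hi => hi.1

lemma normalLevel_anti : Antitone (normalLevel r) :=
  antitone_nat_of_succ_le (normalLevel_succ_subset r)

lemma exists_main (hN : 1 ≤ N) (habn : normalPlayers r = ∅) :
    (∀ i j : Fin N, j ≠ i → 0 < r {j} i) ∨
      ∃ m, (∀ j, j ≠ m → 0 < r {m} j) ∧ ∃ k, k ≠ m ∧ r {k} m ≤ 0 := by
  classical
  haveI : Nonempty (Fin N) := ⟨⟨0, hN⟩⟩
  have hanti := normalLevel_anti r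
  have hcongr : ∀ {a b : ℕ}, normalLevel r a = normalLevel r b →
      normalLevel r (a+1) = normalLevel r (b+1) := by
    intro a b h
    show {i | i ∈ normalLevel r a ∧ ∃ j ∈ normalLevel r a, j ≠ i ∧ r {j} i ≤ 0}
      = {i | i ∈ normalLevel r b ∧ ∃ j ∈ normalLevel r b, j ≠ i ∧ r {j} i ≤ 0}
    rw [h]
  have hempty : ∃ l, normalLevel r l = ∅ := by
    by_contra hno
    push_neg at hno
    obtain ⟨a, b, hlt, heq⟩ : ∃ a b : ℕ, a < b ∧ normalLevel r a = normalLevel r b := by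
      obtain ⟨a, b, hab, heq⟩ :=
        Finite.exists_ne_map_eq_of_infinite (fun l : ℕ => normalLevel r l)
      rcases hab.lt_or_gt with h | h
      · exact ⟨a, b, h, heq⟩
      · exact ⟨b, a, h, heq.symm⟩
    have hstep1 : normalLevel r (a+1) = normalLevel r a := by
      refine Set.Subset.antisymm (normalLevel_succ_subset r a) ?_
      rw [heq]
      exact hanti hlt
    have hconst : ∀ c, normalLevel r (a + c) = normalLevel r a := by
      intro c
      induction c with
      | zero => rfl
      | succ n ih =>
        have h2 := hcongr ih
        rw [show a + (n+1) = (a+n)+1 from rfl, h2, hstep1]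
    obtain ⟨x, hx⟩ := hno a
    have hmem : x ∈ normalPlayers r := by
      refine Set.mem_iInter.2 fun l => ?_
      rcases le_or_gt l a with h | h
      · exact hanti h hx
      · have h3 : a + (l - a) = l := by omega
        rw [← h3, hconst (l - a)]
        exact hx
    rw [habn] at hmem
    exact hmem
  set L := Nat.find hempty with hLdef
  have hLspec : normalLevel r L = ∅ := Nat.find_spec hempty
  have hL0 : L ≠ 0 := by
    intro h
    rw [h] at hLspec
    exact (Set.univ_nonempty (α := Fin N)).ne_empty hLspec
  set M := L - 1 with hMdef
  have hML : M + 1 = L := by omega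
  have hMne : (normalLevel r M).Nonempty := by
    refine Set.nonempty_iff_ne_empty.2 ?_
    exact Nat.find_min hempty (by omega : M < L)
  obtain ⟨m, hm⟩ := hMne
  -- the key positivity property of top-level players
  have hP1 : ∀ (x : Fin N), x ∈ normalLevel r M → ∀ j, j ≠ x → 0 < r {x} j := by
    intro x hx j hj
    have hjex : ∃ l, j ∉ normalLevel r (l+1) := by
      refine ⟨M, ?_⟩
      rw [hML, hLspec]
      exact Set.notMem_empty j
    have hspec : j ∉ normalLevel r (Nat.find hjex + 1) := Nat.find_spec hjex
    have hjin : j ∈ normalLevel r (Nat.find hjex) := by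
      rcases Nat.eq_zero_or_pos (Nat.find hjex) with h | h
      · rw [h]; exact Set.mem_univ j
      · have h2 := Nat.find_min hjex (show Nat.find hjex - 1 < Nat.find hjex by omega)
        rw [not_not] at h2
        have h3 : Nat.find hjex - 1 + 1 = Nat.find hjex := by omega
        rwa [h3] at h2
    have hle : Nat.find hjex ≤ M := Nat.find_min' hjex (by
      rw [hML, hLspec]; exact Set.notMem_empty j)
    have hxin : x ∈ normalLevel r (Nat.find hjex) := hanti hle hx
    have hspec2 : ¬(j ∈ normalLevel r (Nat.find hjex) ∧
        ∃ k ∈ normalLevel r (Nat.find hjex), k ≠ j ∧ r {k} j ≤ 0) := hspec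
    push_neg at hspec2
    have h4 := hspec2 hjin x hxin (Ne.symm hj)
    linarith
  by_cases hL1 : L = 1
  · left
    intro i j hji
    have h1 : i ∉ normalLevel r 1 := by
      rw [← hL1, hLspec]
      exact Set.notMem_empty i
    have h2 : ¬(i ∈ normalLevel r 0 ∧
        ∃ k ∈ normalLevel r 0, k ≠ i ∧ r {k} i ≤ 0) := h1
    push_neg at h2
    have h3 := h2 (Set.mem_univ i) j (Set.mem_univ j) hji
    linarith
  · right
    refine ⟨m, hP1 m hm, ?_⟩
    have hM1 : 1 ≤ M := by omega
    have hm1 : m ∈ normalLevel r 1 := hanti hM1 hm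
    obtain ⟨-, k, -, hkne, hkle⟩ := hm1
    exact ⟨k, hkne, hkle⟩

end comb

end QG

/-- **If all players are abnormal (the set of normal players is empty), then the quitting
game admits a stationary `ε`-equilibrium, for every `ε > 0`.** -/
theorem quitting_game_stationary_equilibrium_of_all_abnormal
    (N : ℕ) (hN : 1 ≤ N)
    (r : Finset (Fin N) → Fin N → ℝ)
    (hr : ∀ S i, r S i ∈ Set.Icc (-1 : ℝ) 1)
    (hdiag : ∀ i : Fin N, r {i} i = 0)
    (habn : normalPlayers r = ∅)
    (ε : ℝ) (hε : 0 < ε) :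
    ∃ x : Fin N → ℕ → ℝ, (∀ i t, x i t = x i 0) ∧ IsEpsEquilibrium r x ε := by
  classical
  by_cases hA : ∀ i, 0 ≤ r ∅ i
  · exact ⟨fun _ _ => 0, fun _ _ => rfl, QG.zero_equilibrium r hr hdiag hA ε (le_of_lt hε)⟩
  · push_neg at hA
    obtain ⟨i0, hi0⟩ := hA
    have he0 : 0 < min ε 1 := lt_min hε one_pos
    have he1 : min ε 1 ≤ 1 := min_le_right ε 1
    have heε : min ε 1 ≤ ε := min_le_left ε 1
    rcases QG.exists_main r hN habn with hglob | ⟨m, hP1, k, hk, hk0⟩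
    · refine ⟨fun i _ => if i = i0 then min ε 1 / 2 else 0, fun _ _ => rfl, ?_⟩
      refine QG.solo_equilibrium r hr hdiag i0 (min ε 1 / 2) ε hε (by linarith)
        (by linarith) (by linarith) ?_ (le_of_lt hi0)
      intro j
      by_cases h : j = i0
      · subst h; exact le_of_eq (hdiag j).symm
      · exact le_of_lt (hglob j i0 fun he => h he.symm)
    · refine ⟨fun i _ => if i = m then min ε 1 / 8
          else if i = k then min ε 1 * (min ε 1 / 8) / 64 else 0,
        fun _ _ => rfl, ?_⟩
      refine QG.pair_equilibrium r hr hdiag m k hk (min ε 1 / 8)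
        (min ε 1 * (min ε 1 / 8) / 64) ε hε
        (by linarith) (by linarith) (by linarith)
        (by nlinarith) (by nlinarith) (by nlinarith) ?_ hk0
      intro j
      by_cases h : j = m
      · subst h; exact le_of_eq (hdiag j).symm
      · exact le_of_lt (hP1 j h)

end
end

section
/- Let (X,d) be a nonempty complete metric space and let f : X → X be a function that has no fixed point. Then for every C ≥ 0 and every c > 0 there exist K ∈ ℕ with K ≥ 1 and points x^1, x^2, …, x^K ∈ X such that (A.1) ∑_{k=1}^K d(x^k, f(x^k)) > C, and (A.2) ∑_{k=1}^{K−1} d(x^{k+1}, f(x^k)) < c. -/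
open Finset Filter

private def cVal {X : Type*} [MetricSpace X] (f : X → X) (n : ℕ) (p : ℕ → X) : ℝ :=
  ∑ k ∈ Finset.range (n + 1), dist (p k) (f (p k))

private def cCost {X : Type*} [MetricSpace X] (f : X → X) (n : ℕ) (p : ℕ → X) : ℝ :=
  ∑ k ∈ Finset.range n, dist (p (k + 1)) (f (p k))

private lemma cVal_nonneg {X : Type*} [MetricSpace X] (f : X → X) (n : ℕ) (p : ℕ → X) :
    0 ≤ cVal f n p := Finset.sum_nonneg fun _ _ => dist_nonneg

private lemma cCost_nonneg {X : Type*} [MetricSpace X] (f : X → X) (n : ℕ) (p : ℕ → X) :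
    0 ≤ cCost f n p := Finset.sum_nonneg fun _ _ => dist_nonneg

private lemma cCost_mono {X : Type*} [MetricSpace X] (f : X → X) {m n : ℕ} (h : m ≤ n)
    (p : ℕ → X) : cCost f m p ≤ cCost f n p :=
  Finset.sum_le_sum_of_subset_of_nonneg (Finset.range_subset_range.2 h) fun _ _ _ => dist_nonneg

/-- Splitting lemma: if every chain of cost `< c` has value `≤ C`, then every chain
has value at most `C + (C/c) * cost`. -/
private lemma cVal_le_of_H {X : Type*} [MetricSpace X] (f : X → X) {C c : ℝ}
    (hC : 0 ≤ C) (hc : 0 < c)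
    (H : ∀ n p, cCost f n p < c → cVal f n p ≤ C) :
    ∀ n p, cVal f n p ≤ C + C / c * cCost f n p := by
  intro n
  induction n using Nat.strong_induction_on with
  | _ n ih =>
    intro p
    by_cases hlt : cCost f n p < c
    · have h1 := H n p hlt
      have h2 := cCost_nonneg f n p
      have h3 : 0 ≤ C / c := div_nonneg hC hc.le
      nlinarith
    · push_neg at hlt
      have hex : ∃ m, c ≤ cCost f m p := ⟨n, hlt⟩
      set m := Nat.find hex with hm
      have hm1 : c ≤ cCost f m p := Nat.find_spec hex
      have hmpos : 0 < m := by
        rcases Nat.eq_zero_or_pos m with h | h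
        · exfalso
          have : cCost f 0 p = 0 := by simp [cCost]
          rw [h, this] at hm1; linarith
        · exact h
      have hmn : m ≤ n := Nat.find_min' hex hlt
      have hj : cCost f (m - 1) p < c := by
        have := Nat.find_min hex (show m - 1 < m from Nat.sub_lt hmpos one_pos)
        exact lt_of_not_ge this
      have hval1 : cVal f (m - 1) p ≤ C := H (m - 1) p hj
      set q : ℕ → X := fun k => p (m + k) with hq
      have hn2 : n - m < n := Nat.sub_lt (lt_of_lt_of_le hmpos hmn) hmpos
      have hval2 := ih (n - m) hn2 q
      have hm1' : (m - 1) + 1 = m := Nat.succ_pred_eq_of_pos hmpos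
      have hsplit_val : cVal f n p = cVal f (m - 1) p + cVal f (n - m) q := by
        have hnn : n + 1 = m + (n - m + 1) := by omega
        rw [cVal, hnn, Finset.sum_range_add, cVal, cVal, hm1']
      have hsplit_cost : cCost f n p = cCost f m p + cCost f (n - m) q := by
        have hnn : Finset.range n = Finset.range (m + (n - m)) := by
          congr 1; omega
        rw [cCost, hnn, Finset.sum_range_add, cCost, cCost]
        congr 1
      have hc2 : 0 ≤ cCost f (n - m) q := cCost_nonneg f _ q
      have hkey : C ≤ C / c * cCost f m p := by
        have : C / c * c ≤ C / c * cCost f m p :=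
          mul_le_mul_of_nonneg_left hm1 (div_nonneg hC hc.le)
        rwa [div_mul_cancel₀ C hc.ne'] at this
      have h3 : 0 ≤ C / c := div_nonneg hC hc.le
      rw [hsplit_val, hsplit_cost]
      nlinarith

private noncomputable def phi {X : Type*} [MetricSpace X] (f : X → X) (lam : ℝ) (x : X) : ℝ :=
  sSup {v : ℝ | ∃ n p, p 0 = x ∧ v = cVal f n p - lam * cCost f n p}

private lemma phi_mem_self {X : Type*} [MetricSpace X] (f : X → X) (lam : ℝ) (x : X) :
    dist x (f x) ∈ {v : ℝ | ∃ n p, p 0 = x ∧ v = cVal f n p - lam * cCost f n p} :=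
  ⟨0, fun _ => x, rfl, by simp [cVal, cCost]⟩

private lemma phi_bddAbove {X : Type*} [MetricSpace X] (f : X → X) {lam C : ℝ}
    (hB : ∀ n p, cVal f n p - lam * cCost f n p ≤ C) (x : X) :
    BddAbove {v : ℝ | ∃ n p, p 0 = x ∧ v = cVal f n p - lam * cCost f n p} := by
  refine ⟨C, ?_⟩
  rintro v ⟨n, p, hp0, rfl⟩
  exact hB n p

private lemma phi_ge {X : Type*} [MetricSpace X] (f : X → X) {lam C : ℝ}
    (hB : ∀ n p, cVal f n p - lam * cCost f n p ≤ C) (x : X) :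
    dist x (f x) ≤ phi f lam x :=
  le_csSup (phi_bddAbove f hB x) (phi_mem_self f lam x)

/-- Key "quasi lower semicontinuity" inequality:
`φ y ≤ φ x + λ * d(y, f x) - d(x, f x)` (prepend `x` to a chain from `y`). -/
private lemma phi_key {X : Type*} [MetricSpace X] (f : X → X) {lam C : ℝ}
    (hB : ∀ n p, cVal f n p - lam * cCost f n p ≤ C) (x y : X) :
    phi f lam y ≤ phi f lam x + lam * dist y (f x) - dist x (f x) := by
  apply csSup_le ⟨_, phi_mem_self f lam y⟩
  rintro v ⟨n, p, hp0, rfl⟩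
  set q : ℕ → X := fun k => Nat.casesOn k x p with hqdef
  have hq0 : q 0 = x := rfl
  have hqs : ∀ k, q (k + 1) = p k := fun k => rfl
  have hval : cVal f (n + 1) q = cVal f n p + dist x (f x) := by
    rw [cVal, Finset.sum_range_succ' (fun k => dist (q k) (f (q k))) (n + 1)]
    simp only [hqs, hq0, cVal]
  have hcost : cCost f (n + 1) q = cCost f n p + dist y (f x) := by
    rw [cCost, Finset.sum_range_succ' (fun k => dist (q (k + 1)) (f (q k))) n]
    simp only [hqs, hq0, cCost, hp0]
  have hmem : cVal f (n + 1) q - lam * cCost f (n + 1) q ≤ phi f lam x :=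
    le_csSup (phi_bddAbove f hB x) ⟨n + 1, q, hq0, rfl⟩
  rw [hval, hcost] at hmem
  linarith

/-- Caristi-type fixed point theorem for our quasi-lsc potential. -/
private lemma caristi_fix {X : Type*} [MetricSpace X] [CompleteSpace X] [Nonempty X]
    (f : X → X) (φ : X → ℝ) (lam : ℝ)
    (h0 : ∀ x, 0 ≤ φ x)
    (h2 : ∀ x y, φ y ≤ φ x + lam * dist y (f x) - dist x (f x)) :
    ∃ w, f w = w := by
  have h1 : ∀ x, φ (f x) + dist x (f x) ≤ φ x := by
    intro x
    have := h2 x (f x)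
    simp only [dist_self, mul_zero, add_zero] at this
    linarith
  set S : X → Set ℝ := fun x => φ '' {y | φ y + dist x y ≤ φ x} with hS
  have hSne : ∀ x, (S x).Nonempty := fun x => ⟨φ x, x, by simp, rfl⟩
  have hSbdd : ∀ x, BddBelow (S x) := by
    intro x
    refine ⟨0, ?_⟩
    rintro v ⟨y, _, rfl⟩
    exact h0 y
  have spec : ∀ (n : ℕ) (x : X), ∃ y, (φ y + dist x y ≤ φ x) ∧
      φ y ≤ sInf (S x) + (1 / 2 : ℝ) ^ n := by
    intro n x
    obtain ⟨a, ⟨y, hy, rfl⟩, ha⟩ := Real.lt_sInf_add_pos (hSne x)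
      (show (0:ℝ) < (1/2)^n by positivity)
    exact ⟨y, hy, ha.le⟩
  choose g hg1 hg2 using spec
  let u : ℕ → X := fun n => Nat.rec (Classical.arbitrary X) (fun n x => g n x) n
  have hu : ∀ n, u (n + 1) = g n (u n) := fun n => rfl
  have hdec : ∀ n, φ (u (n + 1)) + dist (u n) (u (n + 1)) ≤ φ (u n) := by
    intro n; rw [hu]; exact hg1 n (u n)
  have hmono : ∀ n m, n ≤ m → φ (u m) + dist (u n) (u m) ≤ φ (u n) := by
    intro n m hnm
    induction m with
    | zero => simp_all
    | succ m ih =>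
      rcases Nat.lt_or_ge n (m + 1) with h | h
      · have hnm' : n ≤ m := Nat.lt_succ_iff.1 h
        have := ih hnm'
        have htri := dist_triangle (u n) (u m) (u (m + 1))
        have := hdec m
        linarith
      · have : n = m + 1 := le_antisymm hnm h
        subst this; simp
  have hanti : Antitone fun n => φ (u n) := by
    apply antitone_nat_of_succ_le
    intro n
    have := hdec n
    have := dist_nonneg (x := u n) (y := u (n + 1))
    linarith
  have hbdd : BddBelow (Set.range fun n => φ (u n)) := ⟨0, by rintro v ⟨n, rfl⟩; exact h0 _⟩
  set L : ℝ := ⨅ n, φ (u n) with hL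
  have htendL : Tendsto (fun n => φ (u n)) atTop (nhds L) := tendsto_atTop_ciInf hanti hbdd
  have hLle : ∀ n, L ≤ φ (u n) := fun n => ciInf_le hbdd n
  -- Cauchy
  have hcauchy : CauchySeq u := by
    apply cauchySeq_of_le_tendsto_0 (fun N => 2 * (φ (u N) - L))
    · intro n m N hNn hNm
      have h1' := hmono N n hNn
      have h2' := hmono N m hNm
      have htri : dist (u n) (u m) ≤ dist (u N) (u n) + dist (u N) (u m) := by
        rw [dist_comm (u N) (u n)]
        exact dist_triangle _ _ _
      have hn' := hLle n
      have hm' := hLle m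
      linarith
    · have : Tendsto (fun N => φ (u N) - L) atTop (nhds (L - L)) :=
        htendL.sub tendsto_const_nhds
      simpa using (this.const_mul 2).congr (fun n => by ring)
  obtain ⟨w, hw⟩ := cauchySeq_tendsto_of_complete hcauchy
  have hdistw : Tendsto (fun n => dist (u n) w) atTop (nhds 0) :=
    tendsto_iff_dist_tendsto_zero.1 hw
  -- d(u n, f (u n)) → 0
  have hfix : ∀ n, dist (u n) (f (u n)) ≤ φ (u n) - φ (u (n + 1)) + (1 / 2 : ℝ) ^ n := by
    intro n
    have hmem : φ (f (u n)) ∈ S (u n) := ⟨f (u n), h1 (u n), rfl⟩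
    have hinf : sInf (S (u n)) ≤ φ (f (u n)) := csInf_le (hSbdd _) hmem
    have := hg2 n (u n)
    rw [← hu] at this
    have := h1 (u n)
    have h3 := hg2 n (u n)
    rw [← hu] at h3
    linarith
  have htend_fu : Tendsto (fun n => dist (u n) (f (u n))) atTop (nhds 0) := by
    have hub : Tendsto (fun n => φ (u n) - φ (u (n + 1)) + (1 / 2 : ℝ) ^ n) atTop (nhds 0) := by
      have t1 : Tendsto (fun n => φ (u (n + 1))) atTop (nhds L) :=
        htendL.comp (tendsto_add_atTop_nat 1)
      have t2 : Tendsto (fun n => ((1:ℝ) / 2) ^ n) atTop (nhds 0) :=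
        tendsto_pow_atTop_nhds_zero_of_lt_one (by norm_num) (by norm_num)
      have := (htendL.sub t1).add t2
      simpa using this
    exact squeeze_zero (fun n => dist_nonneg) hfix hub
  -- φ w ≤ L
  have hphiw : φ w ≤ L := by
    have hrhs : Tendsto (fun n => φ (u n) + lam * dist w (f (u n)) - dist (u n) (f (u n)))
        atTop (nhds (L + lam * 0 - 0)) := by
      have hdwf : Tendsto (fun n => dist w (f (u n))) atTop (nhds 0) := by
        apply squeeze_zero (fun n => dist_nonneg)
          (fun n => dist_triangle w (u n) (f (u n)))
        have := (tendsto_iff_dist_tendsto_zero.1 hw)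
        have hsum := ((hdistw.congr (fun n => dist_comm (u n) w)).add htend_fu)
        simpa using hsum
      exact ((htendL.add (hdwf.const_mul lam)).sub htend_fu)
    have hle : ∀ n, φ w ≤ φ (u n) + lam * dist w (f (u n)) - dist (u n) (f (u n)) :=
      fun n => h2 (u n) w
    have := ge_of_tendsto' hrhs hle
    simpa using this
  -- dist (u n) w ≤ φ (u n) - L
  have hdw : ∀ n, dist (u n) w ≤ φ (u n) - L := by
    intro n
    have htd : Tendsto (fun m => dist (u n) (u m)) atTop (nhds (dist (u n) w)) :=
      (Continuous.tendsto (continuous_const.dist continuous_id) w).comp hw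
    apply le_of_tendsto htd
    filter_upwards [eventually_ge_atTop n] with m hm
    have := hmono n m hm
    have := hLle m
    linarith
  -- f w ∈ S (u n) hence L ≤ φ (f w)
  have hLfw : L ≤ φ (f w) := by
    have hmem : ∀ n, φ (f w) ∈ S (u n) := by
      intro n
      refine ⟨f w, ?_, rfl⟩
      have htri := dist_triangle (u n) w (f w)
      have h1w := h1 w
      have := hdw n
      simp only [Set.mem_setOf_eq]
      linarith [hphiw]
    have hstep : ∀ n, φ (u (n + 1)) ≤ φ (f w) + (1 / 2 : ℝ) ^ n := by
      intro n
      have := hg2 n (u n)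
      rw [← hu] at this
      have hinf : sInf (S (u n)) ≤ φ (f w) := csInf_le (hSbdd _) (hmem n)
      linarith
    have t1 : Tendsto (fun n => φ (u (n + 1))) atTop (nhds L) :=
      htendL.comp (tendsto_add_atTop_nat 1)
    have t2 : Tendsto (fun n => φ (f w) + ((1:ℝ) / 2) ^ n) atTop (nhds (φ (f w) + 0)) :=
      tendsto_const_nhds.add
        (tendsto_pow_atTop_nhds_zero_of_lt_one (by norm_num) (by norm_num))
    have := le_of_tendsto_of_tendsto' t1 t2 hstep
    simpa using this
  have h1w := h1 w
  have : dist w (f w) ≤ 0 := by linarith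
  have : dist w (f w) = 0 := le_antisymm this dist_nonneg
  exact ⟨w, (dist_eq_zero.1 this).symm⟩

/-- **Approximation theorem: if `f : X → X` has no fixed point on a nonempty complete
metric space `X`, then for every `C ≥ 0` and `c > 0` there are `K ≥ 1` and points
`x^1,…,x^K` such that `∑_{k=1}^K d(x^k, f(x^k)) > C` and
`∑_{k=1}^{K-1} d(x^{k+1}, f(x^k)) < c`.** -/
theorem exists_approximate_orbit {X : Type*} [MetricSpace X] [CompleteSpace X]
    [Nonempty X] (f : X → X) (hf : ∀ x : X, f x ≠ x)
    (C c : ℝ) (hC : 0 ≤ C) (hc : 0 < c) :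
    ∃ (K : ℕ) (x : ℕ → X), 1 ≤ K ∧
      (C < ∑ k ∈ Finset.range K, dist (x k) (f (x k))) ∧
      (∑ k ∈ Finset.range (K - 1), dist (x (k + 1)) (f (x k)) < c) := by
  by_contra hcon
  push_neg at hcon
  have H : ∀ n p, cCost f n p < c → cVal f n p ≤ C := by
    intro n p hcost
    by_contra hv
    push_neg at hv
    have := hcon (n + 1) p (Nat.le_add_left 1 n) hv
    rw [show n + 1 - 1 = n from rfl] at this
    exact absurd hcost (not_lt.2 this)
  have hbound := cVal_le_of_H f hC hc H
  have hB : ∀ n p, cVal f n p - (C / c + 1) * cCost f n p ≤ C := by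
    intro n p
    have h1 := hbound n p
    have h2 := cCost_nonneg f n p
    nlinarith
  obtain ⟨w, hw⟩ := caristi_fix f (phi f (C / c + 1)) (C / c + 1)
    (fun x => le_trans dist_nonneg (phi_ge f hB x))
    (fun x y => phi_key f hB x y)
  exact hf w hw
end
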